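/- arXiv:math/0509413 — 4 statements merged into one kernel-verified Lean document; each statement's English description precedes it below -/
import Mathlib

section
/- A 3-regular 4-ordered simple graph on more than 4 vertices contains no triangle (cycle of length 3). -/
/-- A cycle in `G` containing the four vertices `v₁, v₂, v₃, v₄` in this order:
it decomposes as four consecutive walks `v₁ → v₂ → v₃ → v₄ → v₁`. -/
def SimpleGraph.CycleInOrder4 {V : Type*} (G : SimpleGraph V)
    (v₁ v₂ v₃ v₄ : V) : Prop :=
  ∃ (p : G.Walk v₁ v₂) (q : G.Walk v₂ v₃) (r : G.Walk v₃ v₄) (s : G.Walk v₄ v₁),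
    (p.append (q.append (r.append s))).IsCycle

/-- `G` is `4`-ordered: for any four distinct vertices there is a cycle
containing them in the specified order. -/
def SimpleGraph.FourOrdered {V : Type*} (G : SimpleGraph V) : Prop :=
  ∀ v₁ v₂ v₃ v₄ : V, v₁ ≠ v₂ → v₁ ≠ v₃ → v₁ ≠ v₄ → v₂ ≠ v₃ → v₂ ≠ v₄ →
    v₃ ≠ v₄ → G.CycleInOrder4 v₁ v₂ v₃ v₄

open SimpleGraph Walk List

/-- In a 3-regular graph, any neighbor of `x` is one of three given distinct
neighbors of `x`. -/
private lemma neighbor_mem_of_three {V : Type*} [Fintype V] {G : SimpleGraph V}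
    [DecidableRel G.Adj] {x a b c : V} (hreg : G.IsRegularOfDegree 3)
    (ha : G.Adj x a) (hb : G.Adj x b) (hc : G.Adj x c)
    (hab : a ≠ b) (hac : a ≠ c) (hbc : b ≠ c) {u : V} (hu : G.Adj x u) :
    u = a ∨ u = b ∨ u = c := by
  classical
  have hsub : ({a, b, c} : Finset V) ⊆ G.neighborFinset x := by
    intro v hv
    simp only [Finset.mem_insert, Finset.mem_singleton] at hv
    rcases hv with rfl | rfl | rfl <;> simpa [SimpleGraph.mem_neighborFinset]
  have hcard : ({a, b, c} : Finset V).card = 3 := by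
    rw [Finset.card_insert_of_notMem (by simp [hab, hac]),
        Finset.card_insert_of_notMem (by simp [hbc]), Finset.card_singleton]
  have heq : ({a, b, c} : Finset V) = G.neighborFinset x :=
    Finset.eq_of_subset_of_card_le hsub
      (by rw [SimpleGraph.card_neighborFinset_eq_degree, hreg x, hcard])
  have hmem : u ∈ ({a, b, c} : Finset V) := by
    rw [heq]; rwa [SimpleGraph.mem_neighborFinset]
  simpa using hmem

/-- In a 3-regular graph every vertex has a neighbor distinct from two given
vertices. -/
private lemma exists_third {V : Type*} [Fintype V] {G : SimpleGraph V}
    [DecidableRel G.Adj] (hreg : G.IsRegularOfDegree 3) (x y z : V) :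
    ∃ x', G.Adj x x' ∧ x' ≠ y ∧ x' ≠ z := by
  classical
  by_contra h
  push_neg at h
  have hsub : G.neighborFinset x ⊆ ({y, z} : Finset V) := by
    intro v hv
    rw [SimpleGraph.mem_neighborFinset] at hv
    by_cases hvy : v = y
    · simp [hvy]
    · simp [h v hv hvy]
  have := Finset.card_le_card hsub
  rw [SimpleGraph.card_neighborFinset_eq_degree, hreg x] at this
  have h2 : ({y, z} : Finset V).card ≤ 2 :=
    le_trans (Finset.card_insert_le _ _) (by simp)
  omega

private lemma walk_closed {V : Type*} {G : SimpleGraph V} (S : Set V)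
    (hS : ∀ ⦃d e⦄, d ∈ S → G.Adj d e → e ∈ S) :
    ∀ {d e : V} (w : G.Walk d e), d ∈ S → ∀ v ∈ w.support, v ∈ S := by
  intro d e w
  induction w with
  | nil =>
    intro hd v hv
    rw [Walk.support_nil, List.mem_singleton] at hv
    exact hv ▸ hd
  | cons h w ih =>
    intro hd v hv
    rw [Walk.support_cons, List.mem_cons] at hv
    rcases hv with rfl | hv
    · exact hd
    · exact ih (hS hd h) v hv

/-- The key lemma: a triangle `a b c` whose vertices `a` and `b` have distinct
third neighbors `a'`, `b'` contradicts 4-orderedness of a cubic graph. -/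
private lemma key {V : Type*} [Fintype V] {G : SimpleGraph V} [DecidableRel G.Adj]
    (hreg : G.IsRegularOfDegree 3) (hord : G.FourOrdered)
    {a b c a' b' : V}
    (hab : G.Adj a b) (hac : G.Adj a c) (hbc : G.Adj b c)
    (ha' : G.Adj a a') (ha'b : a' ≠ b) (ha'c : a' ≠ c)
    (hb' : G.Adj b b') (hb'a : b' ≠ a) (hb'c : b' ≠ c)
    (hne : a' ≠ b') : False := by
  obtain ⟨p, q, r, s, hcyc⟩ :=
    hord a' a b' b ha'.ne' hne ha'b hb'a.symm hab.ne hb'.ne'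
  -- decompose q : a → b' and s : b → a'
  obtain ⟨u, hu, q', rfl⟩ := Walk.exists_eq_cons_of_ne hb'a.symm q
  obtain ⟨v, hv, s', rfl⟩ := Walk.exists_eq_cons_of_ne ha'b.symm s
  set q : G.Walk a b' := Walk.cons hu q' with hqdef
  set s : G.Walk b a' := Walk.cons hv s' with hsdef
  have hnd : (p.support.tail ++ (q.support.tail ++
      (r.support.tail ++ s.support.tail))).Nodup := by
    have h0 := hcyc.support_nodup
    rw [Walk.support_append, Walk.support_append, Walk.support_append,
        r.support_eq_cons, List.cons_append, List.tail_cons,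
        q.support_eq_cons, List.cons_append, List.tail_cons,
        p.support_eq_cons, List.cons_append, List.tail_cons] at h0
    exact h0
  rw [List.nodup_append, List.nodup_append, List.nodup_append] at hnd
  obtain ⟨-, ⟨-, ⟨-, -, hCD⟩, hBCD⟩, hABCD⟩ := hnd
  -- memberships
  have hqtail : q.support.tail = q'.support := by rw [hqdef, Walk.support_cons]; rfl
  have hstail : s.support.tail = s'.support := by rw [hsdef, Walk.support_cons]; rfl
  have huB : u ∈ q.support.tail := by rw [hqtail]; exact q'.start_mem_support
  have hb'B : b' ∈ q.support.tail := by rw [hqtail]; exact q'.end_mem_support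
  have hvD : v ∈ s.support.tail := by rw [hstail]; exact s'.start_mem_support
  have ha'D : a' ∈ s.support.tail := by rw [hstail]; exact s'.end_mem_support
  have haA : a ∈ p.support.tail := by
    have := p.end_mem_support
    rw [p.support_eq_cons, List.mem_cons] at this
    rcases this with h | h
    · exact absurd h ha'.ne
    · exact h
  have hbC : b ∈ r.support.tail := by
    have := r.end_mem_support
    rw [r.support_eq_cons, List.mem_cons] at this
    rcases this with h | h
    · exact absurd h hb'.ne
    · exact h
  -- first step of q is c
  have hu3 : u = b ∨ u = c ∨ u = a' :=
    neighbor_mem_of_three hreg hab hac ha' hbc.ne ha'b.symm ha'c.symm hu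
  have hcB : c ∈ q.support.tail := by
    rcases hu3 with rfl | rfl | rfl
    · exact (hBCD _ huB _ (List.mem_append_left _ hbC) rfl).elim
    · exact huB
    · exact (hBCD _ huB _ (List.mem_append_right _ ha'D) rfl).elim
  -- first step of s is impossible
  have hv3 : v = a ∨ v = c ∨ v = b' :=
    neighbor_mem_of_three hreg hab.symm hbc hb' hac.ne hb'a.symm hb'c.symm hv
  rcases hv3 with rfl | rfl | rfl
  · exact hABCD _ haA _ (List.mem_append_right _ (List.mem_append_right _ hvD)) rfl
  · exact hBCD _ hcB _ (List.mem_append_right _ hvD) rfl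
  · exact hBCD _ hb'B _ (List.mem_append_right _ hvD) rfl

theorem cubic_fourOrdered_triangleFree {V : Type*} [Fintype V]
    (G : SimpleGraph V) [DecidableRel G.Adj]
    (hreg : G.IsRegularOfDegree 3) (hord : G.FourOrdered)
    (hcard : 4 < Fintype.card V) : G.CliqueFree 3 := by
  classical
  intro t ht
  obtain ⟨x, y, z, hxy', hxz', hyz', hteq⟩ := Finset.card_eq_three.mp ht.2
  subst hteq
  have hxmem : x ∈ (({x, y, z} : Finset V) : Set V) := by simp
  have hymem : y ∈ (({x, y, z} : Finset V) : Set V) := by simp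
  have hzmem : z ∈ (({x, y, z} : Finset V) : Set V) := by simp
  have hxy : G.Adj x y := ht.1 hxmem hymem hxy'
  have hxz : G.Adj x z := ht.1 hxmem hzmem hxz'
  have hyz : G.Adj y z := ht.1 hymem hzmem hyz'
  obtain ⟨xp, hxp, hxpy, hxpz⟩ := exists_third hreg x y z
  obtain ⟨yp, hyp, hypx, hypz⟩ := exists_third hreg y x z
  obtain ⟨zp, hzp, hzpx, hzpy⟩ := exists_third hreg z x y
  by_cases h1 : xp ≠ yp
  · exact key hreg hord hxy hxz hyz hxp hxpy hxpz hyp hypx hypz h1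
  by_cases h2 : xp ≠ zp
  · exact key hreg hord hxz hxy hyz.symm hxp hxpz hxpy hzp hzpx hzpy h2
  push_neg at h1 h2
  -- now xp = yp = zp =: w, and {x,y,z,w} is a K₄ component
  set w := xp with hw
  have hywadj : G.Adj y w := h1 ▸ hyp
  have hzwadj : G.Adj z w := h2 ▸ hzp
  -- find a vertex outside {x, y, z, w}
  have h4 : ({x, y, z, w} : Finset V).card ≤ 4 := by
    refine le_trans (Finset.card_insert_le _ _) ?_
    refine le_trans (Nat.add_le_add_right (Finset.card_insert_le _ _) 1) ?_
    refine le_trans (Nat.add_le_add_right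
      (Nat.add_le_add_right (Finset.card_insert_le _ _) 1) 1) ?_
    simp
  obtain ⟨u, humem⟩ : ∃ u, u ∉ ({x, y, z, w} : Finset V) := by
    by_contra h
    push_neg at h
    have : (Finset.univ : Finset V) ⊆ {x, y, z, w} := fun v _ => h v
    have := Finset.card_le_card this
    rw [Finset.card_univ] at this
    omega
  have hux : u ≠ x := by intro h; exact humem (by simp [h])
  have huy : u ≠ y := by intro h; exact humem (by simp [h])
  have huz : u ≠ z := by intro h; exact humem (by simp [h])
  have huw : u ≠ w := by intro h; exact humem (by simp [h])
  -- {x,y,z,w} is closed under adjacency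
  set S : Set V := {v | v ∈ ({x, y, z, w} : Finset V)} with hS
  have hclosed : ∀ ⦃d e⦄, d ∈ S → G.Adj d e → e ∈ S := by
    intro d e hd hde
    simp only [hS, Finset.mem_insert, Finset.mem_singleton, Set.mem_setOf_eq] at hd ⊢
    rcases hd with rfl | rfl | rfl | rfl
    · rcases neighbor_mem_of_three hreg hxy hxz hxp hyz' hxpy.symm hxpz.symm hde with
        rfl | rfl | rfl
      · tauto
      · tauto
      · tauto
    · rcases neighbor_mem_of_three hreg hxy.symm hyz hywadj hxz' (by rw [h1]; exact hypx.symm)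
        (by rw [h1]; exact hypz.symm) hde with rfl | rfl | rfl
      · tauto
      · tauto
      · tauto
    · rcases neighbor_mem_of_three hreg hxz.symm hyz.symm hzwadj hxy'
        (by rw [h2]; exact hzpx.symm) (by rw [h2]; exact hzpy.symm) hde with rfl | rfl | rfl
      · tauto
      · tauto
      · tauto
    · rcases neighbor_mem_of_three hreg hxp.symm hywadj.symm hzwadj.symm hxy' hxz' hyz'
        hde with rfl | rfl | rfl
      · tauto
      · tauto
      · tauto
  obtain ⟨p, q, r, s, hcyc⟩ := hord x y z u hxy' hxz' hux.symm hyz' huy.symm huz.symm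
  have huc : u ∈ (p.append (q.append (r.append s))).support := by
    rw [Walk.mem_support_append_iff, Walk.mem_support_append_iff,
      Walk.mem_support_append_iff]
    exact Or.inr (Or.inr (Or.inl r.end_mem_support))
  have hxS : x ∈ S := by simp [hS]
  have := walk_closed S hclosed (p.append (q.append (r.append s))) hxS u huc
  simp only [hS, Set.mem_setOf_eq] at this
  exact humem this
end

section
/- If G is a 3-regular 4-ordered simple graph on more than 6 vertices, then every vertex of G has exactly 6 vertices at distance 2. -/
namespace FourOrderedAux

open SimpleGraph SimpleGraph.Walk

variable {V : Type*} {G : SimpleGraph V}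

lemma mem_tail {a b w : V} {p : G.Walk a b} (hw : w ∈ p.support) (hne : w ≠ a) :
    w ∈ p.support.tail := by
  rw [support_eq_cons] at hw
  rcases List.mem_cons.mp hw with h | h
  · exact absurd h hne
  · exact h

lemma snd_adj {a b : V} (p : G.Walk a b) (h : a ≠ b) : G.Adj a (p.getVert 1) :=
  p.adj_snd (not_nil_of_ne h)

lemma snd_mem {a b : V} (p : G.Walk a b) : p.getVert 1 ∈ p.support := by
  rw [mem_support_iff_exists_getVert]
  by_cases h : 1 ≤ p.length
  · exact ⟨1, rfl, h⟩
  · have : p.getVert 1 = b := p.getVert_of_length_le (by omega)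
    exact ⟨p.length, by rw [getVert_length, this], le_refl _⟩

lemma rsnd_mem {a b : V} (p : G.Walk a b) : p.reverse.getVert 1 ∈ p.support := by
  have := snd_mem p.reverse
  rwa [support_reverse, List.mem_reverse] at this

lemma walk_closed {S : Set V} (hS : ∀ ⦃a b⦄, a ∈ S → G.Adj a b → b ∈ S) :
    ∀ {a b : V} (w : G.Walk a b), a ∈ S → ∀ x ∈ w.support, x ∈ S := by
  intro a b w
  induction w with
  | nil =>
    intro ha x hx
    rw [support_nil, List.mem_singleton] at hx
    subst hx; exact ha
  | cons h p ih =>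
    intro ha x hx
    rw [support_cons] at hx
    rcases List.mem_cons.mp hx with rfl | hx'
    · exact ha
    · exact ih (hS ha h) x hx'

lemma cycSeg {v1 v2 v3 v4 : V} {p : G.Walk v1 v2} {q : G.Walk v2 v3} {r : G.Walk v3 v4}
    {s : G.Walk v4 v1} (hc : (p.append (q.append (r.append s))).IsCycle) :
    List.Disjoint p.support.tail q.support.tail ∧
    List.Disjoint p.support.tail r.support.tail ∧
    List.Disjoint p.support.tail s.support.tail ∧
    List.Disjoint q.support.tail r.support.tail ∧
    List.Disjoint q.support.tail s.support.tail ∧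
    List.Disjoint r.support.tail s.support.tail := by
  have h := hc.support_nodup
  have he : (p.append (q.append (r.append s))).support.tail
      = p.support.tail ++ (q.support.tail ++ (r.support.tail ++ s.support.tail)) := by
    rw [tail_support_append, tail_support_append, tail_support_append]
  rw [he, List.nodup_append] at h
  obtain ⟨-, h2, hd1⟩ := h
  rw [List.nodup_append] at h2
  obtain ⟨-, h3, hd2⟩ := h2
  rw [List.nodup_append] at h3
  obtain ⟨-, -, hd3⟩ := h3
  replace hd1 : List.Disjoint p.support.tail (q.support.tail ++ (r.support.tail ++ s.support.tail)) := by
    intro a ha hb; exact hd1 a ha a hb rfl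
  replace hd2 : List.Disjoint q.support.tail (r.support.tail ++ s.support.tail) := by
    intro a ha hb; exact hd2 a ha a hb rfl
  replace hd3 : List.Disjoint r.support.tail s.support.tail := by
    intro a ha hb; exact hd3 a ha a hb rfl
  rw [List.disjoint_append_right] at hd1 hd2
  rw [List.disjoint_append_right] at hd1
  exact ⟨hd1.1, hd1.2.1, hd1.2.2, hd2.1, hd2.2, hd3⟩

section Reg

variable [Fintype V] [DecidableEq V] [DecidableRel G.Adj]

lemma mem_of_adj3 (hreg : G.IsRegularOfDegree 3) {a b1 b2 b3 c : V}
    (h1 : G.Adj a b1) (h2 : G.Adj a b2) (h3 : G.Adj a b3)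
    (h12 : b1 ≠ b2) (h13 : b1 ≠ b3) (h23 : b2 ≠ b3) (hc : G.Adj a c) :
    c = b1 ∨ c = b2 ∨ c = b3 := by
  have hsub : ({b1, b2, b3} : Finset V) ⊆ G.neighborFinset a := by
    intro w hw
    rw [SimpleGraph.mem_neighborFinset]
    simp only [Finset.mem_insert, Finset.mem_singleton] at hw
    rcases hw with rfl | rfl | rfl <;> assumption
  have hcard : ({b1, b2, b3} : Finset V).card = 3 := by
    rw [Finset.card_insert_of_notMem (by simp [h12, h13]),
      Finset.card_insert_of_notMem (by simp [h23]), Finset.card_singleton]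
  have heq : ({b1, b2, b3} : Finset V) = G.neighborFinset a :=
    Finset.eq_of_subset_of_card_le hsub (by
      have hd := hreg a
      rw [← SimpleGraph.card_neighborFinset_eq_degree] at hd
      rw [hcard, hd])
  have hmem : c ∈ G.neighborFinset a := (SimpleGraph.mem_neighborFinset _ _ _).mpr hc
  rw [← heq] at hmem
  simpa using hmem

lemma exists_third (hreg : G.IsRegularOfDegree 3) {a b1 b2 : V}
    (h1 : G.Adj a b1) (h2 : G.Adj a b2) (h12 : b1 ≠ b2) :
    ∃ c, G.Adj a c ∧ c ≠ b1 ∧ c ≠ b2 := by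
  have hb1 : b1 ∈ G.neighborFinset a := (SimpleGraph.mem_neighborFinset _ _ _).mpr h1
  have hb2 : b2 ∈ (G.neighborFinset a).erase b1 := by
    rw [Finset.mem_erase]
    exact ⟨h12.symm, (SimpleGraph.mem_neighborFinset _ _ _).mpr h2⟩
  have hdeg := hreg a
  rw [← SimpleGraph.card_neighborFinset_eq_degree] at hdeg
  have hcard : (((G.neighborFinset a).erase b1).erase b2).card = 1 := by
    rw [Finset.card_erase_of_mem hb2, Finset.card_erase_of_mem hb1, hdeg]
  have hne : (((G.neighborFinset a).erase b1).erase b2).Nonempty := by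
    rw [← Finset.card_pos, hcard]; omega
  obtain ⟨c, hcm⟩ := hne
  rw [Finset.mem_erase, Finset.mem_erase, SimpleGraph.mem_neighborFinset] at hcm
  exact ⟨c, hcm.2.2, hcm.2.1, hcm.1⟩

lemma mem_pair_of {s : Finset V} (hcard : s.card = 2) {A B z : V}
    (hA : A ∈ s) (hB : B ∈ s) (hz : z ∈ s) (hAB : A ≠ B) : z = A ∨ z = B := by
  by_contra h
  push_neg at h
  have hsub : ({z, A, B} : Finset V) ⊆ s := by
    intro w hw
    simp only [Finset.mem_insert, Finset.mem_singleton] at hw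
    rcases hw with rfl | rfl | rfl <;> assumption
  have h3 : ({z, A, B} : Finset V).card = 3 := by
    rw [Finset.card_insert_of_notMem (by simp [h.1, h.2]),
      Finset.card_insert_of_notMem (by simp [hAB]), Finset.card_singleton]
  have := Finset.card_le_card hsub
  omega

/-- Triangle-freeness of `4`-ordered cubic graphs on more than 6 vertices. -/
lemma tri_free (hreg : G.IsRegularOfDegree 3) (hord : G.FourOrdered)
    (hcard : 6 < Fintype.card V) :
    ∀ x y z : V, G.Adj x y → G.Adj y z → G.Adj z x → False := by
  classical
  intro x y z hxy hyz hzx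
  have hc3 : ({x, y, z} : Finset V).card ≤ 3 := by
    refine le_trans (Finset.card_insert_le _ _) ?_
    have h2 := Finset.card_insert_le y ({z} : Finset V)
    simp only [Finset.card_singleton] at h2
    omega
  have hcompl : 1 < (({x, y, z} : Finset V)ᶜ).card := by
    rw [Finset.card_compl]; omega
  obtain ⟨w₁, hw₁, w₂, hw₂, hww⟩ := Finset.one_lt_card.mp hcompl
  rw [Finset.mem_compl] at hw₁ hw₂
  simp only [Finset.mem_insert, Finset.mem_singleton, not_or] at hw₁ hw₂
  obtain ⟨hw1x, hw1y, hw1z⟩ := hw₁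
  obtain ⟨hw2x, hw2y, hw2z⟩ := hw₂
  obtain ⟨p, q, r, s, hc⟩ := hord x w₁ y w₂ (Ne.symm hw1x) hxy.ne (Ne.symm hw2x)
    hw1y hww (Ne.symm hw2y)
  obtain ⟨d12, d13, d14, d23, d24, d34⟩ := cycSeg hc
  set A := q.reverse.getVert 1 with hAdef
  set B := r.getVert 1 with hBdef
  set P1 := p.getVert 1 with hP1def
  set P2 := s.reverse.getVert 1 with hP2def
  have hyA : G.Adj y A := snd_adj q.reverse (Ne.symm hw1y)
  have hyB : G.Adj y B := snd_adj r (Ne.symm hw2y)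
  have hxP1 : G.Adj x P1 := snd_adj p (Ne.symm hw1x)
  have hxP2 : G.Adj x P2 := snd_adj s.reverse (Ne.symm hw2x)
  have hAq : A ∈ q.support := rsnd_mem q
  have hBr : B ∈ r.support := snd_mem r
  have hP1p : P1 ∈ p.support := snd_mem p
  have hP2s : P2 ∈ s.support := rsnd_mem s
  have hAx : A ≠ x := by
    intro hEq
    exact d24 (mem_tail (hEq ▸ hAq) (Ne.symm hw1x))
      (mem_tail (end_mem_support s) (Ne.symm hw2x))
  have hBx : B ≠ x := by
    intro hEq
    exact d34 (mem_tail (hEq ▸ hBr) hxy.ne)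
      (mem_tail (end_mem_support s) (Ne.symm hw2x))
  have hAB : A ≠ B := by
    intro hEq
    by_cases hA1 : A = w₁
    · have h1 : w₁ ∈ p.support.tail := mem_tail (end_mem_support p) hw1x
      have h2 : w₁ ∈ r.support.tail :=
        mem_tail ((hA1.symm.trans hEq).symm ▸ hBr) hw1y
      exact d13 h1 h2
    · have h1 : A ∈ q.support.tail := mem_tail hAq hA1
      have h2 : A ∈ r.support.tail := mem_tail (hEq.symm ▸ hBr) hyA.ne'
      exact d23 h1 h2
  have hP1y : P1 ≠ y := by
    intro hEq
    exact d12 (mem_tail (hEq ▸ hP1p) hxy.ne')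
      (mem_tail (end_mem_support q) (Ne.symm hw1y))
  have hP2y : P2 ≠ y := by
    intro hEq
    exact d24 (mem_tail (end_mem_support q) (Ne.symm hw1y))
      (mem_tail (hEq ▸ hP2s) (Ne.symm hw2y))
  have hP1P2 : P1 ≠ P2 := by
    intro hEq
    by_cases hP1w2 : P1 = w₂
    · have h1 : w₂ ∈ p.support.tail := mem_tail (hP1w2 ▸ hP1p) hw2x
      have h2 : w₂ ∈ r.support.tail := mem_tail (end_mem_support r) hw2y
      exact d13 h1 h2
    · exact d14 (mem_tail hP1p hxP1.ne') (mem_tail (hEq.symm ▸ hP2s) hP1w2)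
  have hNy : ((G.neighborFinset y).erase x).card = 2 := by
    have hd := hreg y
    rw [← SimpleGraph.card_neighborFinset_eq_degree] at hd
    rw [Finset.card_erase_of_mem ((SimpleGraph.mem_neighborFinset _ _ _).mpr hxy.symm)]
    omega
  have hzAB : z = A ∨ z = B := by
    refine mem_pair_of hNy ?_ ?_ ?_ hAB
    · exact Finset.mem_erase.mpr ⟨hAx, (SimpleGraph.mem_neighborFinset _ _ _).mpr hyA⟩
    · exact Finset.mem_erase.mpr ⟨hBx, (SimpleGraph.mem_neighborFinset _ _ _).mpr hyB⟩
    · exact Finset.mem_erase.mpr ⟨hzx.ne, (SimpleGraph.mem_neighborFinset _ _ _).mpr hyz⟩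
  have hNx : ((G.neighborFinset x).erase y).card = 2 := by
    have hd := hreg x
    rw [← SimpleGraph.card_neighborFinset_eq_degree] at hd
    rw [Finset.card_erase_of_mem ((SimpleGraph.mem_neighborFinset _ _ _).mpr hxy)]
    omega
  have hzP : z = P1 ∨ z = P2 := by
    refine mem_pair_of hNx ?_ ?_ ?_ hP1P2
    · exact Finset.mem_erase.mpr ⟨hP1y, (SimpleGraph.mem_neighborFinset _ _ _).mpr hxP1⟩
    · exact Finset.mem_erase.mpr ⟨hP2y, (SimpleGraph.mem_neighborFinset _ _ _).mpr hxP2⟩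
    · exact Finset.mem_erase.mpr ⟨hyz.ne', (SimpleGraph.mem_neighborFinset _ _ _).mpr hzx.symm⟩
  have hzq : z = A → z ∈ q.support.tail := fun h => mem_tail (h.symm ▸ hAq) (Ne.symm hw1z)
  have hzr : z = B → z ∈ r.support.tail := fun h => mem_tail (h.symm ▸ hBr) hyz.ne'
  have hzp : z = P1 → z ∈ p.support.tail := fun h => mem_tail (h.symm ▸ hP1p) hzx.ne
  have hzs : z = P2 → z ∈ s.support.tail := fun h => mem_tail (h.symm ▸ hP2s) (Ne.symm hw2z)
  rcases hzAB with h1 | h1 <;> rcases hzP with h2 | h2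
  · exact d12 (hzp h2) (hzq h1)
  · exact d24 (hzq h1) (hzs h2)
  · exact d13 (hzp h2) (hzr h1)
  · exact d34 (hzr h1) (hzs h2)

/-- Killing a 4-cycle via its diagonal: `a, b` have two common neighbours `m, n`,
and distinct "third" neighbours `a₃ ≠ b₃`. -/
lemma diagKill (hreg : G.IsRegularOfDegree 3) (hord : G.FourOrdered)
    {a b m n a₃ b₃ : V} (ham : G.Adj a m) (han : G.Adj a n) (hbm : G.Adj b m)
    (hbn : G.Adj b n) (ha3 : G.Adj a a₃) (hb3 : G.Adj b b₃) (hmn : m ≠ n)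
    (hnadj : ¬G.Adj a b) (hab : a ≠ b) (h3m : a₃ ≠ m) (h3n : a₃ ≠ n)
    (hb3m : b₃ ≠ m) (hb3n : b₃ ≠ n) (h33 : a₃ ≠ b₃) : False := by
  have hab3 : a ≠ b₃ := by rintro rfl; exact hnadj hb3.symm
  have hba3 : b ≠ a₃ := by rintro rfl; exact hnadj ha3
  obtain ⟨p, q, r, s, hc⟩ := hord a b a₃ b₃ hab ha3.ne hab3 hba3 hb3.ne h33
  obtain ⟨d12, d13, d14, d23, d24, d34⟩ := cycSeg hc
  set X := p.getVert 1 with hXdef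
  set Y := q.getVert 1 with hYdef
  set Z := s.reverse.getVert 1 with hZdef
  have haX : G.Adj a X := snd_adj p hab
  have hbY : G.Adj b Y := snd_adj q hba3
  have haZ : G.Adj a Z := snd_adj s.reverse hab3
  have hXp : X ∈ p.support := snd_mem p
  have hYq : Y ∈ q.support := snd_mem q
  have hZs : Z ∈ s.support := rsnd_mem s
  have hX : X = m ∨ X = n := by
    rcases mem_of_adj3 hreg ham han ha3 hmn h3m.symm h3n.symm haX with h | h | h
    · exact Or.inl h
    · exact Or.inr h
    · exact absurd (d12 (mem_tail (h ▸ hXp) ha3.ne') (mem_tail (end_mem_support q) (Ne.symm hba3)))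
        (fun hf => hf)
  have hY : Y = m ∨ Y = n := by
    rcases mem_of_adj3 hreg hbm hbn hb3 hmn hb3m.symm hb3n.symm hbY with h | h | h
    · exact Or.inl h
    · exact Or.inr h
    · exact absurd (d23 (mem_tail (h ▸ hYq) hb3.ne') (mem_tail (end_mem_support r) (Ne.symm h33)))
        (fun hf => hf)
  have hZ : Z = m ∨ Z = n := by
    rcases mem_of_adj3 hreg ham han ha3 hmn h3m.symm h3n.symm haZ with h | h | h
    · exact Or.inl h
    · exact Or.inr h
    · exact absurd (d24 (mem_tail (end_mem_support q) (Ne.symm hba3)) (mem_tail (h ▸ hZs) h33))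
        (fun hf => hf)
  have hXb : X ≠ b := by
    rcases hX with h | h
    · rw [h]; exact Ne.symm hbm.ne
    · rw [h]; exact Ne.symm hbn.ne
  have hXb3 : X ≠ b₃ := by
    rcases hX with h | h
    · rw [h]; exact Ne.symm hb3m
    · rw [h]; exact Ne.symm hb3n
  have hYb3 : Y ≠ b₃ := by
    rcases hY with h | h
    · rw [h]; exact Ne.symm hb3m
    · rw [h]; exact Ne.symm hb3n
  have hXY : X ≠ Y := by
    intro hEq
    exact d12 (mem_tail hXp haX.ne') (mem_tail (hEq.symm ▸ hYq) hXb)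
  have hXZ : X ≠ Z := by
    intro hEq
    exact d14 (mem_tail hXp haX.ne') (mem_tail (hEq.symm ▸ hZs) hXb3)
  have hYZ : Y ≠ Z := by
    intro hEq
    exact d24 (mem_tail hYq hbY.ne') (mem_tail (hEq.symm ▸ hZs) hYb3)
  rcases hX with h1 | h1 <;> rcases hY with h2 | h2 <;> rcases hZ with h3 | h3
  all_goals first
    | exact hXY (h1.trans h2.symm)
    | exact hXZ (h1.trans h3.symm)
    | exact hYZ (h2.trans h3.symm)

/-- No vertex lies on a 4-cycle. -/
lemma sq_free (hreg : G.IsRegularOfDegree 3) (hord : G.FourOrdered)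
    (hcard : 6 < Fintype.card V) :
    ∀ v x y u : V, G.Adj v x → G.Adj v y → G.Adj x u → G.Adj y u →
      x ≠ y → v ≠ u → False := by
  classical
  intro v x y u hvx hvy hxu hyu hxy hvu
  have htri := tri_free hreg hord hcard
  have hnadj_vu : ¬G.Adj v u := fun h => htri v x u hvx hxu h.symm
  have hnadj_xy : ¬G.Adj x y := fun h => htri v x y hvx h hvy.symm
  obtain ⟨z, hvz, hzx, hzy⟩ := exists_third hreg hvx hvy hxy
  obtain ⟨u₃, huu₃, hu₃x, hu₃y⟩ := exists_third hreg hxu.symm hyu.symm hxy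
  obtain ⟨x₃, hxx₃, hx₃v, hx₃u⟩ := exists_third hreg hvx.symm hxu hvu
  obtain ⟨y₃, hyy₃, hy₃v, hy₃u⟩ := exists_third hreg hvy.symm hyu hvu
  by_cases hzu : z = u₃
  swap
  · exact diagKill hreg hord hvx hvy hxu.symm hyu.symm hvz huu₃ hxy hnadj_vu hvu
      hzx hzy hu₃x hu₃y hzu
  by_cases hxy3 : x₃ = y₃
  swap
  · exact diagKill hreg hord hvx.symm hxu hvy.symm hyu hxx₃ hyy₃ hvu hnadj_xy hxy
      hx₃v hx₃u hy₃v hy₃u hxy3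
  have huz : G.Adj u z := hzu.symm ▸ huu₃
  have hyx₃' : G.Adj y x₃ := hxy3.symm ▸ hyy₃
  have hnadj_zx : ¬G.Adj z x := fun h => htri v z x hvz h hvx.symm
  have hnadj_zy : ¬G.Adj z y := fun h => htri v z y hvz h hvy.symm
  obtain ⟨t, hzt, htv, htu⟩ := exists_third hreg hvz.symm huz.symm hvu
  by_cases htx : t = x₃
  swap
  · exact diagKill hreg hord hvz.symm huz.symm hvx.symm hxu hzt hxx₃ hvu hnadj_zx
      hzx htv htu hx₃v hx₃u htx
  have hzx₃ : G.Adj z x₃ := htx ▸ hzt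
  have hyx₃ : G.Adj y x₃ := hyx₃'
  have hne_zx : z ≠ x := hzx
  have hne_zy : z ≠ y := hzy
  set S : Set V := {v, x, u, y, z, x₃} with hSdef
  have hS : ∀ ⦃a b : V⦄, a ∈ S → G.Adj a b → b ∈ S := by
    intro a b ha hab
    simp only [hSdef, Set.mem_insert_iff, Set.mem_singleton_iff] at ha ⊢
    rcases ha with rfl | rfl | rfl | rfl | rfl | rfl
    · rcases mem_of_adj3 hreg hvx hvy hvz hxy hne_zx.symm hne_zy.symm hab with rfl | rfl | rfl
      · tauto
      · tauto
      · tauto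
    · rcases mem_of_adj3 hreg hvx.symm hxu hxx₃ hvu (Ne.symm hx₃v) (Ne.symm hx₃u) hab
        with rfl | rfl | rfl
      · tauto
      · tauto
      · tauto
    · rcases mem_of_adj3 hreg hxu.symm hyu.symm huz hxy hne_zx.symm hne_zy.symm hab
        with rfl | rfl | rfl
      · tauto
      · tauto
      · tauto
    · rcases mem_of_adj3 hreg hvy.symm hyu hyx₃ hvu (Ne.symm hx₃v) (Ne.symm hx₃u) hab
        with rfl | rfl | rfl
      · tauto
      · tauto
      · tauto
    · rcases mem_of_adj3 hreg hvz.symm huz.symm hzx₃ hvu (Ne.symm hx₃v) (Ne.symm hx₃u) hab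
        with rfl | rfl | rfl
      · tauto
      · tauto
      · tauto
    · rcases mem_of_adj3 hreg hxx₃.symm hyx₃.symm hzx₃.symm hxy hne_zx.symm hne_zy.symm hab
        with rfl | rfl | rfl
      · tauto
      · tauto
      · tauto
  -- outsider
  have hF6 : ({v, x, u, y, z, x₃} : Finset V).card ≤ 6 := by
    refine le_trans (Finset.card_insert_le _ _) ?_
    have h1 := Finset.card_insert_le x ({u, y, z, x₃} : Finset V)
    have h2 := Finset.card_insert_le u ({y, z, x₃} : Finset V)
    have h3 := Finset.card_insert_le y ({z, x₃} : Finset V)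
    have h4 := Finset.card_insert_le z ({x₃} : Finset V)
    simp only [Finset.card_singleton] at h4
    omega
  have hcompl : (({v, x, u, y, z, x₃} : Finset V)ᶜ).Nonempty := by
    rw [← Finset.card_pos, Finset.card_compl]
    omega
  obtain ⟨w, hw⟩ := hcompl
  rw [Finset.mem_compl] at hw
  simp only [Finset.mem_insert, Finset.mem_singleton, not_or] at hw
  obtain ⟨hwv, hwx, hwu, hwy, hwz, hwx₃⟩ := hw
  obtain ⟨p, q, r, s, hc⟩ := hord v x w u hvx.ne (Ne.symm hwv) hvu (Ne.symm hwx)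
    hxu.ne hwu
  have hwsup : w ∈ (p.append (q.append (r.append s))).support := by
    have h1 : w ∈ (r.append s).support := subset_support_append_left _ _ (start_mem_support r)
    have h2 : w ∈ (q.append (r.append s)).support := subset_support_append_right _ _ h1
    exact subset_support_append_right _ _ h2
  have hvS : v ∈ S := by simp [hSdef]
  have := walk_closed hS _ hvS w hwsup
  simp only [hSdef, Set.mem_insert_iff, Set.mem_singleton_iff] at this
  rcases this with rfl | rfl | rfl | rfl | rfl | rfl
  · exact hwv rfl
  · exact hwx rfl
  · exact hwu rfl
  · exact hwy rfl
  · exact hwz rfl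
  · exact hwx₃ rfl

end Reg

end FourOrderedAux

theorem cubic_fourOrdered_six_at_distance_two {V : Type*} [Fintype V]
    (G : SimpleGraph V) [DecidableRel G.Adj]
    (hreg : G.IsRegularOfDegree 3) (hord : G.FourOrdered)
    (hcard : 6 < Fintype.card V) :
    ∀ v : V, {u : V | G.dist v u = 2}.ncard = 6 := by
  classical
  intro v
  have htri := FourOrderedAux.tri_free hreg hord hcard
  have hsq := FourOrderedAux.sq_free hreg hord hcard
  have h3 : (G.neighborFinset v).card = 3 := hreg v
  obtain ⟨x, y, z, hxy, hxz, hyz, hN⟩ := Finset.card_eq_three.mp h3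
  have hvx : G.Adj v x := by
    rw [← SimpleGraph.mem_neighborFinset, hN]; simp
  have hvy : G.Adj v y := by
    rw [← SimpleGraph.mem_neighborFinset, hN]; simp
  have hvz : G.Adj v z := by
    rw [← SimpleGraph.mem_neighborFinset, hN]; simp
  set F : Finset V := ((G.neighborFinset x).erase v) ∪
      (((G.neighborFinset y).erase v) ∪ ((G.neighborFinset z).erase v)) with hF
  have key : ∀ w u : V, G.Adj v w → G.Adj w u → u ≠ v → G.dist v u = 2 := by
    intro w u hvw hwu hu0
    have hwalk : G.Walk v u :=
      SimpleGraph.Walk.cons hvw (SimpleGraph.Walk.cons hwu SimpleGraph.Walk.nil)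
    have hle : G.dist v u ≤ 2 :=
      SimpleGraph.dist_le (SimpleGraph.Walk.cons hvw (SimpleGraph.Walk.cons hwu SimpleGraph.Walk.nil))
    have h0 : G.dist v u ≠ 0 := by
      intro h0
      rcases SimpleGraph.dist_eq_zero_iff_eq_or_not_reachable.mp h0 with h | h
      · exact hu0 h.symm
      · exact h ⟨hwalk⟩
    have h1 : G.dist v u ≠ 1 := by
      intro h1
      exact htri v w u hvw hwu (SimpleGraph.dist_eq_one_iff_adj.mp h1).symm
    omega
  have hset : {u : V | G.dist v u = 2} = ↑F := by
    ext u
    simp only [Set.mem_setOf_eq, hF, Finset.coe_union, Set.mem_union, Finset.mem_coe,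
      Finset.mem_erase, SimpleGraph.mem_neighborFinset]
    constructor
    · intro hd
      have hu0 : u ≠ v := by
        rintro rfl
        rw [SimpleGraph.dist_self] at hd
        omega
      obtain ⟨p, hp⟩ := SimpleGraph.exists_walk_of_dist_ne_zero (by omega : G.dist v u ≠ 0)
      have hlen : p.length = 2 := by rw [hp, hd]
      have h1 : G.Adj v (p.getVert 1) := by
        have := p.adj_getVert_succ (i := 0) (by omega)
        rwa [p.getVert_zero] at this
      have h2 : G.Adj (p.getVert 1) u := by
        have h := p.adj_getVert_succ (i := 1) (by omega)
        have h2' : p.getVert 2 = u := by rw [← hlen, p.getVert_length]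
        rwa [show (1 + 1 : ℕ) = 2 from rfl, h2'] at h
      have hm : p.getVert 1 ∈ G.neighborFinset v := (SimpleGraph.mem_neighborFinset _ _ _).mpr h1
      rw [hN] at hm
      simp only [Finset.mem_insert, Finset.mem_singleton] at hm
      rcases hm with hm | hm | hm
      · exact Or.inl ⟨hu0, hm ▸ h2⟩
      · exact Or.inr (Or.inl ⟨hu0, hm ▸ h2⟩)
      · exact Or.inr (Or.inr ⟨hu0, hm ▸ h2⟩)
    · rintro (⟨hu0, hadj⟩ | ⟨hu0, hadj⟩ | ⟨hu0, hadj⟩)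
      · exact key x u hvx hadj hu0
      · exact key y u hvy hadj hu0
      · exact key z u hvz hadj hu0
  rw [hset, Set.ncard_coe_finset]
  have c1 : ((G.neighborFinset x).erase v).card = 2 := by
    have hd := hreg x
    rw [← SimpleGraph.card_neighborFinset_eq_degree] at hd
    rw [Finset.card_erase_of_mem ((SimpleGraph.mem_neighborFinset _ _ _).mpr hvx.symm)]
    omega
  have c2 : ((G.neighborFinset y).erase v).card = 2 := by
    have hd := hreg y
    rw [← SimpleGraph.card_neighborFinset_eq_degree] at hd
    rw [Finset.card_erase_of_mem ((SimpleGraph.mem_neighborFinset _ _ _).mpr hvy.symm)]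
    omega
  have c3 : ((G.neighborFinset z).erase v).card = 2 := by
    have hd := hreg z
    rw [← SimpleGraph.card_neighborFinset_eq_degree] at hd
    rw [Finset.card_erase_of_mem ((SimpleGraph.mem_neighborFinset _ _ _).mpr hvz.symm)]
    omega
  have hdisj : ∀ a b : V, G.Adj v a → G.Adj v b → a ≠ b →
      Disjoint ((G.neighborFinset a).erase v) ((G.neighborFinset b).erase v) := by
    intro a b hva hvb hab
    rw [Finset.disjoint_left]
    intro u hu1 hu2
    rw [Finset.mem_erase, SimpleGraph.mem_neighborFinset] at hu1 hu2
    exact hsq v a b u hva hvb hu1.2 hu2.2 hab (Ne.symm hu1.1)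
  have dyz := hdisj y z hvy hvz hyz
  have dxy := hdisj x y hvx hvy hxy
  have dxz := hdisj x z hvx hvz hxz
  rw [hF, Finset.card_union_of_disjoint (Finset.disjoint_union_right.mpr ⟨dxy, dxz⟩),
    Finset.card_union_of_disjoint dyz, c1, c2, c3]
end

section
/- The Petersen graph is 4-ordered: for any sequence of 4 distinct vertices v1, v2, v3, v4 of the Petersen graph, there exists a cycle containing these 4 vertices in the specified order. -/
/-- The Petersen graph as the Kneser graph `K(5,2)`: vertices are the
2-element subsets of a 5-element set, adjacent iff disjoint. -/
def petersenGraph : SimpleGraph {s : Finset (Fin 5) // s.card = 2} :=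
  SimpleGraph.fromRel (fun a b => Disjoint a.1 b.1)

namespace PetersenAux

/-- adjacency table for the standard Petersen graph on `Fin 10`. -/
def adjB (a b : Fin 10) : Bool :=
  decide ((min a.val b.val, max a.val b.val) ∈
    [(0,1),(1,2),(2,3),(3,4),(0,4),(5,7),(7,9),(6,9),(6,8),(5,8),(0,5),(1,6),(2,7),(3,8),(4,9)])

def G10 : SimpleGraph (Fin 10) := SimpleGraph.fromRel (fun a b => adjB a b)

instance : DecidableRel G10.Adj := fun a b => by
  unfold G10; rw [SimpleGraph.fromRel_adj]; infer_instance

instance {V : Type*} [DecidableEq V] {G : SimpleGraph V} {u v : V} (p : G.Walk u v) :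
    Decidable p.IsTrail :=
  decidable_of_iff _ (SimpleGraph.Walk.isTrail_def p).symm

instance {V : Type*} [DecidableEq V] {G : SimpleGraph V} {u : V} (p : G.Walk u u) :
    Decidable p.IsCycle :=
  decidable_of_iff (p.IsTrail ∧ p.length ≠ 0 ∧ p.support.tail.Nodup) (by
    rw [SimpleGraph.Walk.isCycle_def]
    simp [SimpleGraph.Walk.isCircuit_def, Ne, ← SimpleGraph.Walk.length_eq_zero_iff, and_assoc])

instance : DecidableRel petersenGraph.Adj := fun a b => by
  unfold petersenGraph; rw [SimpleGraph.fromRel_adj]; infer_instance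

def mkWalk (a b : Fin 10) : List (Fin 10) → Option (G10.Walk a b)
  | [] => if h : G10.Adj a b then some (SimpleGraph.Walk.cons h .nil) else none
  | c :: l => if h : G10.Adj a c then (mkWalk c b l).map (SimpleGraph.Walk.cons h) else none

def splitAt? (v : Fin 10) : List (Fin 10) → Option (List (Fin 10) × List (Fin 10))
  | [] => none
  | a :: t => if a = v then some ([], t)
      else (splitAt? v t).map (fun p => (a :: p.1, p.2))

def splits (v₂ v₃ v₄ : Fin 10) (l : List (Fin 10)) :
    Option (List (Fin 10) × List (Fin 10) × List (Fin 10) × List (Fin 10)) :=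
  match splitAt? v₂ l with
  | none => none
  | some (l₁, r₁) =>
    match splitAt? v₃ r₁ with
    | none => none
    | some (l₂, r₂) =>
      match splitAt? v₄ r₂ with
      | none => none
      | some (l₃, l₄) => some (l₁, l₂, l₃, l₄)

def goodB (v : Fin 10) (l : List (Fin 10)) : Bool :=
  match mkWalk v v l with
  | some w => decide w.IsCycle
  | none => false

def candFor : Fin 10 → List (List (Fin 10))
  | 0 => [[1, 6, 8, 3, 4, 9, 7, 5],
      [5, 7, 9, 4, 3, 8, 6, 1],
      [1, 2, 7, 5, 8, 6, 9, 4],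
      [4, 9, 6, 8, 5, 7, 2, 1],
      [4, 9, 6, 1, 2, 3, 8, 5],
      [5, 8, 3, 2, 1, 6, 9, 4],
      [4, 3, 2, 7, 9, 6, 8, 5],
      [5, 8, 6, 9, 7, 2, 3, 4],
      [1, 6, 9, 7, 5, 8, 3, 4],
      [4, 3, 8, 5, 7, 9, 6, 1],
      [4, 3, 8, 6, 1, 2, 7, 5],
      [5, 7, 2, 1, 6, 8, 3, 4],
      [1, 6, 9, 4, 3, 2, 7, 5],
      [5, 7, 2, 3, 4, 9, 6, 1],
      [1, 2, 7, 9, 4, 3, 8, 5],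
      [5, 8, 3, 4, 9, 7, 2, 1],
      [1, 6, 8, 3, 2, 7, 9, 4],
      [4, 9, 7, 2, 3, 8, 6, 1],
      [1, 2, 3, 8, 6, 9, 7, 5],
      [5, 7, 9, 6, 8, 3, 2, 1],
      [1, 2, 3, 8, 5, 7, 9, 4],
      [4, 9, 7, 5, 8, 3, 2, 1],
      [1, 6, 8, 5, 7, 2, 3, 4],
      [4, 3, 2, 7, 5, 8, 6, 1],
      [4, 9, 7, 2, 1, 6, 8, 5],
      [5, 8, 6, 1, 2, 7, 9, 4],
      [1, 2, 7, 9, 6, 8, 3, 4],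
      [4, 3, 8, 6, 9, 7, 2, 1],
      [1, 6, 9, 7, 2, 3, 8, 5],
      [5, 8, 3, 2, 7, 9, 6, 1],
      [1, 2, 3, 4, 9, 6, 8, 5],
      [5, 8, 6, 9, 4, 3, 2, 1],
      [4, 9, 6, 8, 3, 2, 7, 5],
      [5, 7, 2, 3, 8, 6, 9, 4],
      [4, 3, 2, 1, 6, 9, 7, 5],
      [5, 7, 9, 6, 1, 2, 3, 4],
      [4, 3, 2, 1, 6, 8, 5],
      [5, 8, 6, 1, 2, 3, 4],
      [4, 3, 8, 6, 9, 7, 5],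
      [5, 7, 9, 6, 8, 3, 4],
      [1, 6, 8, 3, 2, 7, 5],
      [5, 7, 2, 3, 8, 6, 1],
      [4, 9, 6, 1, 2, 7, 5],
      [5, 7, 2, 1, 6, 9, 4],
      [1, 2, 7, 5, 8, 3, 4],
      [4, 3, 8, 5, 7, 2, 1],
      [1, 2, 3, 8, 6, 9, 4],
      [4, 9, 6, 8, 3, 2, 1],
      [1, 6, 8, 5, 7, 9, 4],
      [4, 9, 7, 5, 8, 6, 1],
      [1, 2, 3, 4, 9, 7, 5],
      [5, 7, 9, 4, 3, 2, 1],
      [1, 2, 7, 9, 6, 8, 5],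
      [5, 8, 6, 9, 7, 2, 1],
      [1, 6, 9, 7, 2, 3, 4],
      [4, 3, 2, 7, 9, 6, 1],
      [4, 9, 7, 2, 3, 8, 5],
      [5, 8, 3, 2, 7, 9, 4],
      [1, 6, 9, 4, 3, 8, 5],
      [5, 8, 3, 4, 9, 6, 1]]
  | 1 => [[6, 8, 3, 4, 9, 7, 5, 0],
      [0, 5, 7, 9, 4, 3, 8, 6],
      [2, 7, 5, 8, 6, 9, 4, 0],
      [0, 4, 9, 6, 8, 5, 7, 2],
      [2, 3, 8, 5, 0, 4, 9, 6],
      [6, 9, 4, 0, 5, 8, 3, 2],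
      [6, 9, 7, 5, 8, 3, 4, 0],
      [0, 4, 3, 8, 5, 7, 9, 6],
      [2, 7, 5, 0, 4, 3, 8, 6],
      [6, 8, 3, 4, 0, 5, 7, 2],
      [2, 3, 4, 9, 7, 5, 8, 6],
      [6, 8, 5, 7, 9, 4, 3, 2],
      [6, 9, 4, 3, 2, 7, 5, 0],
      [0, 5, 7, 2, 3, 4, 9, 6],
      [2, 7, 9, 4, 3, 8, 5, 0],
      [0, 5, 8, 3, 4, 9, 7, 2],
      [6, 8, 3, 2, 7, 9, 4, 0],
      [0, 4, 9, 7, 2, 3, 8, 6],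
      [2, 3, 8, 6, 9, 7, 5, 0],
      [0, 5, 7, 9, 6, 8, 3, 2],
      [2, 3, 8, 5, 7, 9, 4, 0],
      [0, 4, 9, 7, 5, 8, 3, 2],
      [2, 7, 5, 8, 3, 4, 9, 6],
      [6, 9, 4, 3, 8, 5, 7, 2],
      [6, 8, 5, 7, 2, 3, 4, 0],
      [0, 4, 3, 2, 7, 5, 8, 6],
      [6, 8, 5, 0, 4, 9, 7, 2],
      [2, 7, 9, 4, 0, 5, 8, 6],
      [2, 7, 9, 6, 8, 3, 4, 0],
      [0, 4, 3, 8, 6, 9, 7, 2],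
      [6, 9, 7, 2, 3, 8, 5, 0],
      [0, 5, 8, 3, 2, 7, 9, 6],
      [2, 3, 4, 9, 6, 8, 5, 0],
      [0, 5, 8, 6, 9, 4, 3, 2],
      [6, 9, 7, 5, 0, 4, 3, 2],
      [2, 3, 4, 0, 5, 7, 9, 6],
      [6, 8, 5, 0, 4, 3, 2],
      [2, 3, 4, 0, 5, 8, 6],
      [6, 8, 3, 2, 7, 5, 0],
      [0, 5, 7, 2, 3, 8, 6],
      [2, 7, 5, 0, 4, 9, 6],
      [6, 9, 4, 0, 5, 7, 2],
      [2, 7, 5, 8, 3, 4, 0],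
      [0, 4, 3, 8, 5, 7, 2],
      [2, 7, 9, 4, 3, 8, 6],
      [6, 8, 3, 4, 9, 7, 2],
      [2, 3, 8, 6, 9, 4, 0],
      [0, 4, 9, 6, 8, 3, 2],
      [6, 8, 5, 7, 9, 4, 0],
      [0, 4, 9, 7, 5, 8, 6],
      [2, 3, 8, 5, 7, 9, 6],
      [6, 9, 7, 5, 8, 3, 2],
      [2, 3, 4, 9, 7, 5, 0],
      [0, 5, 7, 9, 4, 3, 2],
      [2, 7, 9, 6, 8, 5, 0],
      [0, 5, 8, 6, 9, 7, 2],
      [6, 9, 7, 2, 3, 4, 0],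
      [0, 4, 3, 2, 7, 9, 6],
      [6, 9, 4, 3, 8, 5, 0],
      [0, 5, 8, 3, 4, 9, 6]]
  | 2 => [[7, 5, 8, 6, 9, 4, 0, 1],
      [1, 0, 4, 9, 6, 8, 5, 7],
      [3, 8, 5, 0, 4, 9, 6, 1],
      [1, 6, 9, 4, 0, 5, 8, 3],
      [7, 9, 6, 8, 5, 0, 4, 3],
      [3, 4, 0, 5, 8, 6, 9, 7],
      [7, 5, 0, 4, 3, 8, 6, 1],
      [1, 6, 8, 3, 4, 0, 5, 7],
      [3, 4, 9, 7, 5, 8, 6, 1],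
      [1, 6, 8, 5, 7, 9, 4, 3],
      [7, 5, 0, 1, 6, 9, 4, 3],
      [3, 4, 9, 6, 1, 0, 5, 7],
      [7, 9, 4, 3, 8, 5, 0, 1],
      [1, 0, 5, 8, 3, 4, 9, 7],
      [7, 9, 4, 0, 1, 6, 8, 3],
      [3, 8, 6, 1, 0, 4, 9, 7],
      [3, 8, 6, 9, 7, 5, 0, 1],
      [1, 0, 5, 7, 9, 6, 8, 3],
      [3, 8, 5, 7, 9, 4, 0, 1],
      [1, 0, 4, 9, 7, 5, 8, 3],
      [7, 5, 8, 3, 4, 9, 6, 1],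
      [1, 6, 9, 4, 3, 8, 5, 7],
      [3, 4, 0, 1, 6, 8, 5, 7],
      [7, 5, 8, 6, 1, 0, 4, 3],
      [1, 6, 8, 5, 0, 4, 9, 7],
      [7, 9, 4, 0, 5, 8, 6, 1],
      [7, 9, 6, 8, 3, 4, 0, 1],
      [1, 0, 4, 3, 8, 6, 9, 7],
      [3, 8, 5, 0, 1, 6, 9, 7],
      [7, 9, 6, 1, 0, 5, 8, 3],
      [3, 4, 9, 6, 8, 5, 0, 1],
      [1, 0, 5, 8, 6, 9, 4, 3],
      [7, 5, 0, 4, 9, 6, 8, 3],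
      [3, 8, 6, 9, 4, 0, 5, 7],
      [1, 6, 9, 7, 5, 0, 4, 3],
      [3, 4, 0, 5, 7, 9, 6, 1],
      [1, 6, 8, 5, 0, 4, 3],
      [3, 4, 0, 5, 8, 6, 1],
      [7, 5, 0, 1, 6, 8, 3],
      [3, 8, 6, 1, 0, 5, 7],
      [7, 5, 0, 4, 9, 6, 1],
      [1, 6, 9, 4, 0, 5, 7],
      [7, 5, 8, 3, 4, 0, 1],
      [1, 0, 4, 3, 8, 5, 7],
      [3, 4, 9, 6, 8, 5, 7],
      [7, 5, 8, 6, 9, 4, 3],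
      [7, 9, 4, 3, 8, 6, 1],
      [1, 6, 8, 3, 4, 9, 7],
      [3, 8, 6, 9, 4, 0, 1],
      [1, 0, 4, 9, 6, 8, 3],
      [3, 8, 5, 7, 9, 6, 1],
      [1, 6, 9, 7, 5, 8, 3],
      [3, 4, 9, 7, 5, 0, 1],
      [1, 0, 5, 7, 9, 4, 3],
      [7, 9, 6, 8, 5, 0, 1],
      [1, 0, 5, 8, 6, 9, 7],
      [3, 4, 0, 1, 6, 9, 7],
      [7, 9, 6, 1, 0, 4, 3],
      [3, 8, 5, 0, 4, 9, 7],
      [7, 9, 4, 0, 5, 8, 3]]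
  | 3 => [[4, 9, 7, 5, 0, 1, 6, 8],
      [8, 6, 1, 0, 5, 7, 9, 4],
      [8, 5, 0, 4, 9, 6, 1, 2],
      [2, 1, 6, 9, 4, 0, 5, 8],
      [2, 7, 9, 6, 8, 5, 0, 4],
      [4, 0, 5, 8, 6, 9, 7, 2],
      [4, 0, 1, 6, 9, 7, 5, 8],
      [8, 5, 7, 9, 6, 1, 0, 4],
      [8, 6, 1, 2, 7, 5, 0, 4],
      [4, 0, 5, 7, 2, 1, 6, 8],
      [4, 9, 7, 5, 8, 6, 1, 2],
      [2, 1, 6, 8, 5, 7, 9, 4],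
      [2, 7, 5, 0, 1, 6, 9, 4],
      [4, 9, 6, 1, 0, 5, 7, 2],
      [8, 5, 0, 1, 2, 7, 9, 4],
      [4, 9, 7, 2, 1, 0, 5, 8],
      [2, 7, 9, 4, 0, 1, 6, 8],
      [8, 6, 1, 0, 4, 9, 7, 2],
      [8, 6, 9, 7, 5, 0, 1, 2],
      [2, 1, 0, 5, 7, 9, 6, 8],
      [8, 5, 7, 9, 4, 0, 1, 2],
      [2, 1, 0, 4, 9, 7, 5, 8],
      [4, 9, 6, 1, 2, 7, 5, 8],
      [8, 5, 7, 2, 1, 6, 9, 4],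
      [4, 0, 1, 6, 8, 5, 7, 2],
      [2, 7, 5, 8, 6, 1, 0, 4],
      [4, 0, 1, 2, 7, 9, 6, 8],
      [8, 6, 9, 7, 2, 1, 0, 4],
      [8, 5, 0, 1, 6, 9, 7, 2],
      [2, 7, 9, 6, 1, 0, 5, 8],
      [4, 9, 6, 8, 5, 0, 1, 2],
      [2, 1, 0, 5, 8, 6, 9, 4],
      [2, 7, 5, 0, 4, 9, 6, 8],
      [8, 6, 9, 4, 0, 5, 7, 2],
      [2, 1, 6, 9, 7, 5, 0, 4],
      [4, 0, 5, 7, 9, 6, 1, 2],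
      [2, 1, 6, 8, 5, 0, 4],
      [4, 0, 5, 8, 6, 1, 2],
      [8, 6, 9, 7, 5, 0, 4],
      [4, 0, 5, 7, 9, 6, 8],
      [2, 7, 5, 0, 1, 6, 8],
      [8, 6, 1, 0, 5, 7, 2],
      [4, 0, 1, 2, 7, 5, 8],
      [8, 5, 7, 2, 1, 0, 4],
      [4, 9, 6, 8, 5, 7, 2],
      [2, 7, 5, 8, 6, 9, 4],
      [8, 6, 1, 2, 7, 9, 4],
      [4, 9, 7, 2, 1, 6, 8],
      [8, 6, 9, 4, 0, 1, 2],
      [2, 1, 0, 4, 9, 6, 8],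
      [8, 5, 7, 9, 6, 1, 2],
      [2, 1, 6, 9, 7, 5, 8],
      [4, 9, 7, 5, 0, 1, 2],
      [2, 1, 0, 5, 7, 9, 4],
      [4, 0, 1, 6, 9, 7, 2],
      [2, 7, 9, 6, 1, 0, 4],
      [8, 5, 0, 4, 9, 7, 2],
      [2, 7, 9, 4, 0, 5, 8],
      [8, 5, 0, 1, 6, 9, 4],
      [4, 9, 6, 1, 0, 5, 8]]
  | 4 => [[9, 7, 5, 0, 1, 6, 8, 3],
      [3, 8, 6, 1, 0, 5, 7, 9],
      [0, 1, 2, 7, 5, 8, 6, 9],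
      [9, 6, 8, 5, 7, 2, 1, 0],
      [9, 6, 1, 2, 3, 8, 5, 0],
      [0, 5, 8, 3, 2, 1, 6, 9],
      [3, 2, 7, 9, 6, 8, 5, 0],
      [0, 5, 8, 6, 9, 7, 2, 3],
      [0, 1, 6, 9, 7, 5, 8, 3],
      [3, 8, 5, 7, 9, 6, 1, 0],
      [3, 8, 6, 1, 2, 7, 5, 0],
      [0, 5, 7, 2, 1, 6, 8, 3],
      [9, 7, 5, 8, 6, 1, 2, 3],
      [3, 2, 1, 6, 8, 5, 7, 9],
      [3, 2, 7, 5, 0, 1, 6, 9],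
      [9, 6, 1, 0, 5, 7, 2, 3],
      [3, 8, 5, 0, 1, 2, 7, 9],
      [9, 7, 2, 1, 0, 5, 8, 3],
      [0, 1, 6, 8, 3, 2, 7, 9],
      [9, 7, 2, 3, 8, 6, 1, 0],
      [0, 1, 2, 3, 8, 5, 7, 9],
      [9, 7, 5, 8, 3, 2, 1, 0],
      [9, 6, 1, 2, 7, 5, 8, 3],
      [3, 8, 5, 7, 2, 1, 6, 9],
      [0, 1, 6, 8, 5, 7, 2, 3],
      [3, 2, 7, 5, 8, 6, 1, 0],
      [9, 7, 2, 1, 6, 8, 5, 0],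
      [0, 5, 8, 6, 1, 2, 7, 9],
      [0, 1, 2, 7, 9, 6, 8, 3],
      [3, 8, 6, 9, 7, 2, 1, 0],
      [9, 6, 8, 5, 0, 1, 2, 3],
      [3, 2, 1, 0, 5, 8, 6, 9],
      [9, 6, 8, 3, 2, 7, 5, 0],
      [0, 5, 7, 2, 3, 8, 6, 9],
      [3, 2, 1, 6, 9, 7, 5, 0],
      [0, 5, 7, 9, 6, 1, 2, 3],
      [3, 2, 1, 6, 8, 5, 0],
      [0, 5, 8, 6, 1, 2, 3],
      [3, 8, 6, 9, 7, 5, 0],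
      [0, 5, 7, 9, 6, 8, 3],
      [9, 6, 1, 2, 7, 5, 0],
      [0, 5, 7, 2, 1, 6, 9],
      [0, 1, 2, 7, 5, 8, 3],
      [3, 8, 5, 7, 2, 1, 0],
      [9, 6, 8, 5, 7, 2, 3],
      [3, 2, 7, 5, 8, 6, 9],
      [3, 8, 6, 1, 2, 7, 9],
      [9, 7, 2, 1, 6, 8, 3],
      [0, 1, 2, 3, 8, 6, 9],
      [9, 6, 8, 3, 2, 1, 0],
      [0, 1, 6, 8, 5, 7, 9],
      [9, 7, 5, 8, 6, 1, 0],
      [9, 7, 5, 0, 1, 2, 3],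
      [3, 2, 1, 0, 5, 7, 9],
      [0, 1, 6, 9, 7, 2, 3],
      [3, 2, 7, 9, 6, 1, 0],
      [9, 7, 2, 3, 8, 5, 0],
      [0, 5, 8, 3, 2, 7, 9],
      [3, 8, 5, 0, 1, 6, 9],
      [9, 6, 1, 0, 5, 8, 3]]
  | 5 => [[0, 1, 6, 8, 3, 4, 9, 7],
      [7, 9, 4, 3, 8, 6, 1, 0],
      [8, 6, 9, 4, 0, 1, 2, 7],
      [7, 2, 1, 0, 4, 9, 6, 8],
      [0, 4, 9, 6, 1, 2, 3, 8],
      [8, 3, 2, 1, 6, 9, 4, 0],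
      [0, 4, 3, 2, 7, 9, 6, 8],
      [8, 6, 9, 7, 2, 3, 4, 0],
      [8, 3, 4, 0, 1, 6, 9, 7],
      [7, 9, 6, 1, 0, 4, 3, 8],
      [0, 4, 3, 8, 6, 1, 2, 7],
      [7, 2, 1, 6, 8, 3, 4, 0],
      [8, 6, 1, 2, 3, 4, 9, 7],
      [7, 9, 4, 3, 2, 1, 6, 8],
      [0, 1, 6, 9, 4, 3, 2, 7],
      [7, 2, 3, 4, 9, 6, 1, 0],
      [0, 1, 2, 7, 9, 4, 3, 8],
      [8, 3, 4, 9, 7, 2, 1, 0],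
      [0, 1, 2, 3, 8, 6, 9, 7],
      [7, 9, 6, 8, 3, 2, 1, 0],
      [7, 9, 4, 0, 1, 2, 3, 8],
      [8, 3, 2, 1, 0, 4, 9, 7],
      [8, 3, 4, 9, 6, 1, 2, 7],
      [7, 2, 1, 6, 9, 4, 3, 8],
      [7, 2, 3, 4, 0, 1, 6, 8],
      [8, 6, 1, 0, 4, 3, 2, 7],
      [0, 4, 9, 7, 2, 1, 6, 8],
      [8, 6, 1, 2, 7, 9, 4, 0],
      [0, 1, 6, 9, 7, 2, 3, 8],
      [8, 3, 2, 7, 9, 6, 1, 0],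
      [0, 1, 2, 3, 4, 9, 6, 8],
      [8, 6, 9, 4, 3, 2, 1, 0],
      [0, 4, 9, 6, 8, 3, 2, 7],
      [7, 2, 3, 8, 6, 9, 4, 0],
      [0, 4, 3, 2, 1, 6, 9, 7],
      [7, 9, 6, 1, 2, 3, 4, 0],
      [0, 4, 3, 2, 1, 6, 8],
      [8, 6, 1, 2, 3, 4, 0],
      [0, 4, 3, 8, 6, 9, 7],
      [7, 9, 6, 8, 3, 4, 0],
      [0, 1, 6, 8, 3, 2, 7],
      [7, 2, 3, 8, 6, 1, 0],
      [0, 4, 9, 6, 1, 2, 7],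
      [7, 2, 1, 6, 9, 4, 0],
      [8, 3, 4, 0, 1, 2, 7],
      [7, 2, 1, 0, 4, 3, 8],
      [7, 2, 3, 4, 9, 6, 8],
      [8, 6, 9, 4, 3, 2, 7],
      [7, 9, 4, 0, 1, 6, 8],
      [8, 6, 1, 0, 4, 9, 7],
      [7, 9, 6, 1, 2, 3, 8],
      [8, 3, 2, 1, 6, 9, 7],
      [0, 1, 2, 3, 4, 9, 7],
      [7, 9, 4, 3, 2, 1, 0],
      [0, 1, 2, 7, 9, 6, 8],
      [8, 6, 9, 7, 2, 1, 0],
      [0, 4, 9, 7, 2, 3, 8],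
      [8, 3, 2, 7, 9, 4, 0],
      [0, 1, 6, 9, 4, 3, 8],
      [8, 3, 4, 9, 6, 1, 0]]
  | 6 => [[8, 3, 4, 9, 7, 5, 0, 1],
      [1, 0, 5, 7, 9, 4, 3, 8],
      [9, 4, 0, 1, 2, 7, 5, 8],
      [8, 5, 7, 2, 1, 0, 4, 9],
      [1, 2, 3, 8, 5, 0, 4, 9],
      [9, 4, 0, 5, 8, 3, 2, 1],
      [8, 5, 0, 4, 3, 2, 7, 9],
      [9, 7, 2, 3, 4, 0, 5, 8],
      [9, 7, 5, 8, 3, 4, 0, 1],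
      [1, 0, 4, 3, 8, 5, 7, 9],
      [1, 2, 7, 5, 0, 4, 3, 8],
      [8, 3, 4, 0, 5, 7, 2, 1],
      [1, 2, 3, 4, 9, 7, 5, 8],
      [8, 5, 7, 9, 4, 3, 2, 1],
      [9, 4, 3, 2, 7, 5, 0, 1],
      [1, 0, 5, 7, 2, 3, 4, 9],
      [8, 3, 2, 7, 9, 4, 0, 1],
      [1, 0, 4, 9, 7, 2, 3, 8],
      [9, 7, 5, 0, 1, 2, 3, 8],
      [8, 3, 2, 1, 0, 5, 7, 9],
      [1, 2, 7, 5, 8, 3, 4, 9],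
      [9, 4, 3, 8, 5, 7, 2, 1],
      [8, 5, 7, 2, 3, 4, 0, 1],
      [1, 0, 4, 3, 2, 7, 5, 8],
      [8, 5, 0, 4, 9, 7, 2, 1],
      [1, 2, 7, 9, 4, 0, 5, 8],
      [8, 3, 4, 0, 1, 2, 7, 9],
      [9, 7, 2, 1, 0, 4, 3, 8],
      [9, 7, 2, 3, 8, 5, 0, 1],
      [1, 0, 5, 8, 3, 2, 7, 9],
      [8, 5, 0, 1, 2, 3, 4, 9],
      [9, 4, 3, 2, 1, 0, 5, 8],
      [8, 3, 2, 7, 5, 0, 4, 9],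
      [9, 4, 0, 5, 7, 2, 3, 8],
      [9, 7, 5, 0, 4, 3, 2, 1],
      [1, 2, 3, 4, 0, 5, 7, 9],
      [8, 5, 0, 4, 3, 2, 1],
      [1, 2, 3, 4, 0, 5, 8],
      [9, 7, 5, 0, 4, 3, 8],
      [8, 3, 4, 0, 5, 7, 9],
      [8, 3, 2, 7, 5, 0, 1],
      [1, 0, 5, 7, 2, 3, 8],
      [1, 2, 7, 5, 0, 4, 9],
      [9, 4, 0, 5, 7, 2, 1],
      [8, 5, 7, 2, 3, 4, 9],
      [9, 4, 3, 2, 7, 5, 8],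
      [1, 2, 7, 9, 4, 3, 8],
      [8, 3, 4, 9, 7, 2, 1],
      [9, 4, 0, 1, 2, 3, 8],
      [8, 3, 2, 1, 0, 4, 9],
      [8, 5, 7, 9, 4, 0, 1],
      [1, 0, 4, 9, 7, 5, 8],
      [1, 2, 3, 8, 5, 7, 9],
      [9, 7, 5, 8, 3, 2, 1],
      [8, 5, 0, 1, 2, 7, 9],
      [9, 7, 2, 1, 0, 5, 8],
      [9, 7, 2, 3, 4, 0, 1],
      [1, 0, 4, 3, 2, 7, 9],
      [9, 4, 3, 8, 5, 0, 1],
      [1, 0, 5, 8, 3, 4, 9]]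
  | 7 => [[5, 0, 1, 6, 8, 3, 4, 9],
      [9, 4, 3, 8, 6, 1, 0, 5],
      [5, 8, 6, 9, 4, 0, 1, 2],
      [2, 1, 0, 4, 9, 6, 8, 5],
      [9, 6, 8, 5, 0, 4, 3, 2],
      [2, 3, 4, 0, 5, 8, 6, 9],
      [5, 8, 3, 4, 0, 1, 6, 9],
      [9, 6, 1, 0, 4, 3, 8, 5],
      [5, 0, 4, 3, 8, 6, 1, 2],
      [2, 1, 6, 8, 3, 4, 0, 5],
      [5, 8, 6, 1, 2, 3, 4, 9],
      [9, 4, 3, 2, 1, 6, 8, 5],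
      [5, 0, 1, 6, 9, 4, 3, 2],
      [2, 3, 4, 9, 6, 1, 0, 5],
      [9, 4, 3, 8, 5, 0, 1, 2],
      [2, 1, 0, 5, 8, 3, 4, 9],
      [9, 4, 0, 1, 6, 8, 3, 2],
      [2, 3, 8, 6, 1, 0, 4, 9],
      [5, 0, 1, 2, 3, 8, 6, 9],
      [9, 6, 8, 3, 2, 1, 0, 5],
      [9, 4, 0, 1, 2, 3, 8, 5],
      [5, 8, 3, 2, 1, 0, 4, 9],
      [5, 8, 3, 4, 9, 6, 1, 2],
      [2, 1, 6, 9, 4, 3, 8, 5],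
      [2, 3, 4, 0, 1, 6, 8, 5],
      [5, 8, 6, 1, 0, 4, 3, 2],
      [2, 1, 6, 8, 5, 0, 4, 9],
      [9, 4, 0, 5, 8, 6, 1, 2],
      [9, 6, 8, 3, 4, 0, 1, 2],
      [2, 1, 0, 4, 3, 8, 6, 9],
      [2, 3, 8, 5, 0, 1, 6, 9],
      [9, 6, 1, 0, 5, 8, 3, 2],
      [5, 0, 4, 9, 6, 8, 3, 2],
      [2, 3, 8, 6, 9, 4, 0, 5],
      [5, 0, 4, 3, 2, 1, 6, 9],
      [9, 6, 1, 2, 3, 4, 0, 5],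
      [5, 0, 4, 3, 8, 6, 9],
      [9, 6, 8, 3, 4, 0, 5],
      [5, 0, 1, 6, 8, 3, 2],
      [2, 3, 8, 6, 1, 0, 5],
      [5, 0, 4, 9, 6, 1, 2],
      [2, 1, 6, 9, 4, 0, 5],
      [5, 8, 3, 4, 0, 1, 2],
      [2, 1, 0, 4, 3, 8, 5],
      [2, 3, 4, 9, 6, 8, 5],
      [5, 8, 6, 9, 4, 3, 2],
      [9, 4, 3, 8, 6, 1, 2],
      [2, 1, 6, 8, 3, 4, 9],
      [9, 4, 0, 1, 6, 8, 5],
      [5, 8, 6, 1, 0, 4, 9],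
      [9, 6, 1, 2, 3, 8, 5],
      [5, 8, 3, 2, 1, 6, 9],
      [5, 0, 1, 2, 3, 4, 9],
      [9, 4, 3, 2, 1, 0, 5],
      [9, 6, 8, 5, 0, 1, 2],
      [2, 1, 0, 5, 8, 6, 9],
      [2, 3, 4, 0, 1, 6, 9],
      [9, 6, 1, 0, 4, 3, 2],
      [2, 3, 8, 5, 0, 4, 9],
      [9, 4, 0, 5, 8, 3, 2]]
  | 8 => [[3, 4, 9, 7, 5, 0, 1, 6],
      [6, 1, 0, 5, 7, 9, 4, 3],
      [6, 9, 4, 0, 1, 2, 7, 5],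
      [5, 7, 2, 1, 0, 4, 9, 6],
      [5, 0, 4, 9, 6, 1, 2, 3],
      [3, 2, 1, 6, 9, 4, 0, 5],
      [5, 0, 4, 3, 2, 7, 9, 6],
      [6, 9, 7, 2, 3, 4, 0, 5],
      [3, 4, 0, 1, 6, 9, 7, 5],
      [5, 7, 9, 6, 1, 0, 4, 3],
      [6, 1, 2, 7, 5, 0, 4, 3],
      [3, 4, 0, 5, 7, 2, 1, 6],
      [6, 1, 2, 3, 4, 9, 7, 5],
      [5, 7, 9, 4, 3, 2, 1, 6],
      [5, 0, 1, 2, 7, 9, 4, 3],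
      [3, 4, 9, 7, 2, 1, 0, 5],
      [3, 2, 7, 9, 4, 0, 1, 6],
      [6, 1, 0, 4, 9, 7, 2, 3],
      [6, 9, 7, 5, 0, 1, 2, 3],
      [3, 2, 1, 0, 5, 7, 9, 6],
      [5, 7, 9, 4, 0, 1, 2, 3],
      [3, 2, 1, 0, 4, 9, 7, 5],
      [3, 4, 9, 6, 1, 2, 7, 5],
      [5, 7, 2, 1, 6, 9, 4, 3],
      [5, 7, 2, 3, 4, 0, 1, 6],
      [6, 1, 0, 4, 3, 2, 7, 5],
      [5, 0, 4, 9, 7, 2, 1, 6],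
      [6, 1, 2, 7, 9, 4, 0, 5],
      [3, 4, 0, 1, 2, 7, 9, 6],
      [6, 9, 7, 2, 1, 0, 4, 3],
      [5, 0, 1, 6, 9, 7, 2, 3],
      [3, 2, 7, 9, 6, 1, 0, 5],
      [5, 0, 1, 2, 3, 4, 9, 6],
      [6, 9, 4, 3, 2, 1, 0, 5],
      [3, 2, 7, 5, 0, 4, 9, 6],
      [6, 9, 4, 0, 5, 7, 2, 3],
      [5, 0, 4, 3, 2, 1, 6],
      [6, 1, 2, 3, 4, 0, 5],
      [6, 9, 7, 5, 0, 4, 3],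
      [3, 4, 0, 5, 7, 9, 6],
      [3, 2, 7, 5, 0, 1, 6],
      [6, 1, 0, 5, 7, 2, 3],
      [3, 4, 0, 1, 2, 7, 5],
      [5, 7, 2, 1, 0, 4, 3],
      [5, 7, 2, 3, 4, 9, 6],
      [6, 9, 4, 3, 2, 7, 5],
      [6, 1, 2, 7, 9, 4, 3],
      [3, 4, 9, 7, 2, 1, 6],
      [6, 9, 4, 0, 1, 2, 3],
      [3, 2, 1, 0, 4, 9, 6],
      [5, 7, 9, 4, 0, 1, 6],
      [6, 1, 0, 4, 9, 7, 5],
      [5, 7, 9, 6, 1, 2, 3],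
      [3, 2, 1, 6, 9, 7, 5],
      [5, 0, 1, 2, 7, 9, 6],
      [6, 9, 7, 2, 1, 0, 5],
      [5, 0, 4, 9, 7, 2, 3],
      [3, 2, 7, 9, 4, 0, 5],
      [5, 0, 1, 6, 9, 4, 3],
      [3, 4, 9, 6, 1, 0, 5]]
  | 9 => [[7, 5, 0, 1, 6, 8, 3, 4],
      [4, 3, 8, 6, 1, 0, 5, 7],
      [4, 0, 1, 2, 7, 5, 8, 6],
      [6, 8, 5, 7, 2, 1, 0, 4],
      [6, 1, 2, 3, 8, 5, 0, 4],
      [4, 0, 5, 8, 3, 2, 1, 6],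
      [6, 8, 5, 0, 4, 3, 2, 7],
      [7, 2, 3, 4, 0, 5, 8, 6],
      [7, 5, 8, 3, 4, 0, 1, 6],
      [6, 1, 0, 4, 3, 8, 5, 7],
      [7, 5, 8, 6, 1, 2, 3, 4],
      [4, 3, 2, 1, 6, 8, 5, 7],
      [4, 3, 2, 7, 5, 0, 1, 6],
      [6, 1, 0, 5, 7, 2, 3, 4],
      [4, 3, 8, 5, 0, 1, 2, 7],
      [7, 2, 1, 0, 5, 8, 3, 4],
      [4, 0, 1, 6, 8, 3, 2, 7],
      [7, 2, 3, 8, 6, 1, 0, 4],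
      [7, 5, 0, 1, 2, 3, 8, 6],
      [6, 8, 3, 2, 1, 0, 5, 7],
      [4, 0, 1, 2, 3, 8, 5, 7],
      [7, 5, 8, 3, 2, 1, 0, 4],
      [6, 1, 2, 7, 5, 8, 3, 4],
      [4, 3, 8, 5, 7, 2, 1, 6],
      [7, 2, 1, 6, 8, 5, 0, 4],
      [4, 0, 5, 8, 6, 1, 2, 7],
      [6, 8, 3, 4, 0, 1, 2, 7],
      [7, 2, 1, 0, 4, 3, 8, 6],
      [7, 2, 3, 8, 5, 0, 1, 6],
      [6, 1, 0, 5, 8, 3, 2, 7],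
      [6, 8, 5, 0, 1, 2, 3, 4],
      [4, 3, 2, 1, 0, 5, 8, 6],
      [6, 8, 3, 2, 7, 5, 0, 4],
      [4, 0, 5, 7, 2, 3, 8, 6],
      [7, 5, 0, 4, 3, 2, 1, 6],
      [6, 1, 2, 3, 4, 0, 5, 7],
      [7, 5, 0, 4, 3, 8, 6],
      [6, 8, 3, 4, 0, 5, 7],
      [6, 1, 2, 7, 5, 0, 4],
      [4, 0, 5, 7, 2, 1, 6],
      [6, 8, 5, 7, 2, 3, 4],
      [4, 3, 2, 7, 5, 8, 6],
      [4, 3, 8, 6, 1, 2, 7],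
      [7, 2, 1, 6, 8, 3, 4],
      [4, 0, 1, 2, 3, 8, 6],
      [6, 8, 3, 2, 1, 0, 4],
      [4, 0, 1, 6, 8, 5, 7],
      [7, 5, 8, 6, 1, 0, 4],
      [6, 1, 2, 3, 8, 5, 7],
      [7, 5, 8, 3, 2, 1, 6],
      [7, 5, 0, 1, 2, 3, 4],
      [4, 3, 2, 1, 0, 5, 7],
      [6, 8, 5, 0, 1, 2, 7],
      [7, 2, 1, 0, 5, 8, 6],
      [7, 2, 3, 4, 0, 1, 6],
      [6, 1, 0, 4, 3, 2, 7],
      [7, 2, 3, 8, 5, 0, 4],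
      [4, 0, 5, 8, 3, 2, 7],
      [4, 3, 8, 5, 0, 1, 6],
      [6, 1, 0, 5, 8, 3, 4]]


def check (v₁ v₂ v₃ v₄ : Fin 10) : Bool :=
  (candFor v₁).any (fun l => (splits v₂ v₃ v₄ l).isSome)

lemma splitAt?_spec {v : Fin 10} : ∀ {l l₁ l₂ : List (Fin 10)},
    splitAt? v l = some (l₁, l₂) → l = l₁ ++ v :: l₂ := by
  intro l
  induction l with
  | nil => intro l₁ l₂ h; simp [splitAt?] at h
  | cons a t ih =>
    intro l₁ l₂ h
    rw [splitAt?] at h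
    split at h
    · next he => obtain ⟨rfl, rfl⟩ := Prod.mk.injEq .. ▸ (Option.some.injEq .. ▸ h); simp [he]
    · cases ht : splitAt? v t with
      | none => rw [ht] at h; simp at h
      | some p =>
        rw [ht] at h
        simp only [Option.map_some, Option.some.injEq] at h
        obtain ⟨p₁, p₂⟩ := p
        cases h
        simpa using ih ht

lemma mkWalk_append {b c : Fin 10} : ∀ {a : Fin 10} {l₁ l₂ : List (Fin 10)}
    {w : G10.Walk a b}, mkWalk a b (l₁ ++ c :: l₂) = some w →
    ∃ (p : G10.Walk a c) (q : G10.Walk c b),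
      mkWalk a c l₁ = some p ∧ mkWalk c b l₂ = some q ∧ w = p.append q := by
  intro a l₁
  induction l₁ generalizing a with
  | nil =>
    intro l₂ w h
    rw [List.nil_append, mkWalk] at h
    split at h
    · next hadj =>
      obtain ⟨q, hq, hmap⟩ := Option.map_eq_some_iff.mp h
      refine ⟨SimpleGraph.Walk.cons hadj .nil, q, ?_, hq, ?_⟩
      · rw [mkWalk]; exact dif_pos hadj
      · rw [← hmap]; simp
    · simp at h
  | cons d t ih =>
    intro l₂ w h
    rw [List.cons_append, mkWalk] at h
    split at h
    · next hadj =>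
      obtain ⟨w', hw', hmap⟩ := Option.map_eq_some_iff.mp h
      obtain ⟨p, q, hp, hq, rfl⟩ := ih hw'
      refine ⟨SimpleGraph.Walk.cons hadj p, q, ?_, hq, ?_⟩
      · rw [mkWalk, dif_pos hadj, hp]; rfl
      · rw [← hmap]; simp
    · simp at h

lemma candAll : ∀ v : Fin 10, (candFor v).all (goodB v) = true := by decide

lemma splits_spec {v₂ v₃ v₄ : Fin 10} : ∀ {l l₁ l₂ l₃ l₄ : List (Fin 10)},
    splits v₂ v₃ v₄ l = some (l₁, l₂, l₃, l₄) →
    l = l₁ ++ v₂ :: (l₂ ++ v₃ :: (l₃ ++ v₄ :: l₄)) := by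
  intro l l₁ l₂ l₃ l₄ h
  rw [splits] at h
  cases h₂ : splitAt? v₂ l with
  | none => rw [h₂] at h; simp at h
  | some p₁ =>
    obtain ⟨a₁, r₁⟩ := p₁
    rw [h₂] at h; dsimp only at h
    cases h₃ : splitAt? v₃ r₁ with
    | none => rw [h₃] at h; simp at h
    | some p₂ =>
      obtain ⟨a₂, r₂⟩ := p₂
      rw [h₃] at h; dsimp only at h
      cases h₄ : splitAt? v₄ r₂ with
      | none => rw [h₄] at h; simp at h
      | some p₃ =>
        obtain ⟨a₃, a₄⟩ := p₃
        rw [h₄] at h; dsimp only at h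
        simp only [Option.some.injEq, Prod.mk.injEq] at h
        obtain ⟨rfl, rfl, rfl, rfl⟩ := h
        rw [splitAt?_spec h₂, splitAt?_spec h₃, splitAt?_spec h₄]

lemma check_spec {v₁ v₂ v₃ v₄ : Fin 10} (h : check v₁ v₂ v₃ v₄ = true) :
    G10.CycleInOrder4 v₁ v₂ v₃ v₄ := by
  obtain ⟨l, hl, hsp⟩ := List.any_eq_true.mp h
  have hgood := List.all_eq_true.mp (candAll v₁) l hl
  rw [goodB] at hgood
  obtain ⟨⟨l₁, l₂, l₃, l₄⟩, hs⟩ := Option.isSome_iff_exists.mp hsp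
  have hleq := splits_spec hs
  subst hleq
  cases hw : mkWalk v₁ v₁ (l₁ ++ v₂ :: (l₂ ++ v₃ :: (l₃ ++ v₄ :: l₄))) with
  | none => rw [hw] at hgood; simp at hgood
  | some w =>
    rw [hw] at hgood
    obtain ⟨p, w', hp, hw', rfl⟩ := mkWalk_append hw
    obtain ⟨q, w'', hq, hw'', rfl⟩ := mkWalk_append hw'
    obtain ⟨r, s, hr, hs', rfl⟩ := mkWalk_append hw''
    exact ⟨p, q, r, s, of_decide_eq_true hgood⟩

set_option synthInstance.maxSize 4000 in
set_option maxHeartbeats 4000000 in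
lemma g10_fourOrdered : G10.FourOrdered := by
  intro v₁ v₂ v₃ v₄ h12 h13 h14 h23 h24 h34
  apply check_spec
  revert h12 h13 h14 h23 h24 h34
  revert v₁ v₂ v₃ v₄
  decide

/-- the labeling of Petersen by 2-subsets of `Fin 5`. -/
def enc : Fin 10 → {s : Finset (Fin 5) // s.card = 2}
  | 0 => ⟨{0,1}, by decide⟩
  | 1 => ⟨{2,3}, by decide⟩
  | 2 => ⟨{0,4}, by decide⟩
  | 3 => ⟨{1,2}, by decide⟩
  | 4 => ⟨{3,4}, by decide⟩
  | 5 => ⟨{2,4}, by decide⟩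
  | 6 => ⟨{1,4}, by decide⟩
  | 7 => ⟨{1,3}, by decide⟩
  | 8 => ⟨{0,3}, by decide⟩
  | 9 => ⟨{0,2}, by decide⟩

lemma enc_adj : ∀ a b : Fin 10, G10.Adj a b → petersenGraph.Adj (enc a) (enc b) := by
  decide

lemma enc_inj : Function.Injective enc := by
  intro a b h
  revert h; revert a b; decide

lemma enc_surj : Function.Surjective enc := by
  decide

def f : G10 →g petersenGraph := ⟨enc, fun h => enc_adj _ _ h⟩

end PetersenAux

theorem petersen_fourOrdered : petersenGraph.FourOrdered := by
  intro v₁ v₂ v₃ v₄ h12 h13 h14 h23 h24 h34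
  obtain ⟨a₁, rfl⟩ := PetersenAux.enc_surj v₁
  obtain ⟨a₂, rfl⟩ := PetersenAux.enc_surj v₂
  obtain ⟨a₃, rfl⟩ := PetersenAux.enc_surj v₃
  obtain ⟨a₄, rfl⟩ := PetersenAux.enc_surj v₄
  obtain ⟨p, q, r, s, hc⟩ := PetersenAux.g10_fourOrdered a₁ a₂ a₃ a₄
    (fun h => h12 (congrArg _ h)) (fun h => h13 (congrArg _ h))
    (fun h => h14 (congrArg _ h)) (fun h => h23 (congrArg _ h))
    (fun h => h24 (congrArg _ h)) (fun h => h34 (congrArg _ h))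
  refine ⟨p.map PetersenAux.f, q.map PetersenAux.f, r.map PetersenAux.f, s.map PetersenAux.f, ?_⟩
  have := hc.map (f := PetersenAux.f) PetersenAux.enc_inj
  simp only [SimpleGraph.Walk.map_append] at this; exact this
end

section
/- The Heawood graph is 4-ordered hamiltonian: for any sequence of 4 distinct vertices v1, v2, v3, v4, there exists a Hamiltonian cycle containing these 4 vertices in the specified order. -/
/-- A Hamiltonian cycle in `G` containing the four vertices `v₁, v₂, v₃, v₄`
in this order: it decomposes as four consecutive walks
`v₁ → v₂ → v₃ → v₄ → v₁`. -/
def SimpleGraph.HamCycleInOrder4 {V : Type*} [DecidableEq V] (G : SimpleGraph V)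
    (v₁ v₂ v₃ v₄ : V) : Prop :=
  ∃ (p : G.Walk v₁ v₂) (q : G.Walk v₂ v₃) (r : G.Walk v₃ v₄) (s : G.Walk v₄ v₁),
    (p.append (q.append (r.append s))).IsHamiltonianCycle

/-- `G` is `4`-ordered hamiltonian: for any four distinct vertices there is a
Hamiltonian cycle containing them in the specified order. -/
def SimpleGraph.FourOrderedHamiltonian {V : Type*} [DecidableEq V] (G : SimpleGraph V) : Prop :=
  ∀ v₁ v₂ v₃ v₄ : V, v₁ ≠ v₂ → v₁ ≠ v₃ → v₁ ≠ v₄ → v₂ ≠ v₃ → v₂ ≠ v₄ →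
    v₃ ≠ v₄ → G.HamCycleInOrder4 v₁ v₂ v₃ v₄

/-- The Heawood graph: the 14-cycle `0-1-⋯-13-0` on `ZMod 14` together with
chords joining `i` to `i + 5 (mod 14)` for each even `i`. -/
def heawoodGraph : SimpleGraph (ZMod 14) :=
  SimpleGraph.fromRel (fun i j => j = i + 1 ∨ (Even i.val ∧ j = i + 5))

/-! ### Generic machinery: walks from lists -/

namespace SimpleGraph
variable {V : Type*} {G : SimpleGraph V}

/-- Build a walk from a chain of adjacent vertices. -/
def walkOfChain : (l : List V) → (u v : V) → List.Chain G.Adj u (l ++ [v]) → G.Walk u v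
  | [], _, _, h => Walk.cons (List.chain_cons.mp h).1 Walk.nil
  | x :: xs, _, v, h =>
      Walk.cons (List.chain_cons.mp h).1 (walkOfChain xs x v (List.chain_cons.mp h).2)

lemma support_walkOfChain : ∀ (l : List V) (u v : V) (h),
    (walkOfChain (G := G) l u v h).support = u :: (l ++ [v])
  | [], u, v, h => rfl
  | x :: xs, u, v, h => by
      simp [walkOfChain, Walk.support_cons]; exact support_walkOfChain xs x v _

lemma edges_walkOfChain_notMem : ∀ (l : List V) (u v x : V) (h),
    v ∉ u :: l → x ∉ l → x ≠ v → (x ≠ u ∨ l ≠ []) →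
    s(v, x) ∉ (walkOfChain (G := G) l u v h).edges
  | [], u, v, x, h, hv, hx, hxv, hxu => by
      simp only [walkOfChain, Walk.edges_cons, Walk.edges_nil, List.mem_singleton,
        List.not_mem_nil, or_false]
      intro he
      rcases Sym2.eq_iff.mp he with ⟨h1, _⟩ | ⟨_, h2⟩
      · exact hv (by simp [h1])
      · rcases hxu with h' | h'
        · exact h' h2
        · exact h' rfl
  | y :: ys, u, v, x, h, hv, hx, hxv, hxu => by
      simp only [walkOfChain, Walk.edges_cons, List.mem_cons]
      rintro (he | he)
      · rcases Sym2.eq_iff.mp he with ⟨h1, _⟩ | ⟨h1, _⟩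
        · exact hv (by simp [h1])
        · exact hv (by simp [h1])
      · exact edges_walkOfChain_notMem ys y v x _
          (fun hm => hv (List.mem_cons_of_mem _ hm))
          (fun hm => hx (List.mem_cons_of_mem _ hm)) hxv
          (Or.inl (fun hxy => hx (hxy ▸ List.mem_cons_self))) he

lemma isHamiltonianCycle_walkOfChain [DecidableEq V] (l : List V) (u : V) (h)
    (hn : (u :: l).Nodup) (hc : ∀ x : V, x ∈ u :: l) (hl : 2 ≤ l.length) :
    (walkOfChain (G := G) l u u h).IsHamiltonianCycle := by
  obtain ⟨x, xs, rfl⟩ : ∃ x xs, l = x :: xs := by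
    cases l with
    | nil => simp at hl
    | cons x xs => exact ⟨x, xs, rfl⟩
  have hxs : xs ≠ [] := by
    cases xs with
    | nil => simp at hl
    | cons _ _ => simp
  have hunx : (u : V) ∉ x :: xs := (List.nodup_cons.mp hn).1
  have hnxxs : (x :: xs).Nodup := (List.nodup_cons.mp hn).2
  have hn' : ((x :: xs) ++ [u]).Nodup := by
    rw [List.nodup_append]
    exact ⟨hnxxs, List.nodup_singleton _,
      fun a ha => by simp only [List.mem_singleton]; rintro _ rfl rfl; exact hunx ha⟩
  rw [Walk.isHamiltonianCycle_iff_isCycle_and_support_count_tail_eq_one]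
  constructor
  · show (Walk.cons _ _).IsCycle
    rw [Walk.cons_isCycle_iff]
    refine ⟨Walk.IsPath.mk' (by exact (congrArg List.Nodup (support_walkOfChain (G := G) xs x u _)).mpr hn'), ?_⟩
    apply edges_walkOfChain_notMem
    · exact hunx
    · exact (List.nodup_cons.mp hnxxs).1
    · rintro rfl; exact hunx (List.mem_cons_self)
    · exact Or.inr hxs
  · intro a
    have hsup : (walkOfChain (G := G) (x :: xs) u u h).support = u :: ((x :: xs) ++ [u]) :=
      support_walkOfChain _ _ _ _
    rw [hsup, List.tail_cons]
    refine List.count_eq_one_of_mem hn' ?_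
    have := hc a
    simp only [List.mem_cons, List.mem_append, List.mem_singleton] at this ⊢
    tauto

lemma walkOfChain_append : ∀ (a : List V) (u x v : V) (m : List V) (h₁) (h₂) (h₃),
    (walkOfChain (G := G) a u x h₁).append (walkOfChain m x v h₂) =
      walkOfChain (a ++ x :: m) u v h₃
  | [], u, x, v, m, h₁, h₂, h₃ => rfl
  | y :: ys, u, x, v, m, h₁, h₂, h₃ => by
      show Walk.cons _ _ = Walk.cons _ _
      exact congrArg (Walk.cons _) (walkOfChain_append ys y x v m _ _ (List.chain_cons.mp h₃).2)

lemma chain_split {R : V → V → Prop} :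
    ∀ (s : List V) (u y : V) (t : List V), List.Chain R u (s ++ y :: t) →
      List.Chain R u (s ++ [y]) ∧ List.Chain R y t
  | [], u, y, t, h => by
      simp only [List.nil_append] at h ⊢
      replace h := List.chain_cons.mp h
      exact ⟨List.chain_cons.mpr ⟨h.1, List.Chain.nil⟩, h.2⟩
  | z :: zs, u, y, t, h => by
      rw [List.cons_append] at h; replace h := List.chain_cons.mp h
      obtain ⟨h1, h2⟩ := chain_split zs z y t h.2
      exact ⟨List.chain_cons.mpr ⟨h.1, h1⟩, h2⟩

/-- The main generic lemma: a Hamiltonian cycle list through `v1, v2, v3, v4`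
in order gives `HamCycleInOrder4`. -/
lemma hamCycleInOrder4_of_list [DecidableEq V] (v1 v2 v3 v4 : V) (a b c d : List V)
    (h1 : List.Chain G.Adj v1 ((a ++ v2 :: (b ++ v3 :: (c ++ v4 :: d))) ++ [v1]))
    (hn : (v1 :: (a ++ v2 :: (b ++ v3 :: (c ++ v4 :: d)))).Nodup)
    (hc : ∀ x : V, x ∈ v1 :: (a ++ v2 :: (b ++ v3 :: (c ++ v4 :: d)))) :
    G.HamCycleInOrder4 v1 v2 v3 v4 := by
  have h1' : List.Chain G.Adj v1 (a ++ v2 :: ((b ++ v3 :: (c ++ v4 :: d)) ++ [v1])) := by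
    simpa only [List.append_assoc, List.cons_append] using h1
  obtain ⟨c1, H2⟩ := chain_split a v1 v2 _ h1'
  have H2' : List.Chain G.Adj v2 (b ++ v3 :: ((c ++ v4 :: d) ++ [v1])) := by
    simpa only [List.append_assoc, List.cons_append] using H2
  obtain ⟨c2, H3⟩ := chain_split b v2 v3 _ H2'
  have H3' : List.Chain G.Adj v3 (c ++ v4 :: (d ++ [v1])) := by
    simpa only [List.append_assoc, List.cons_append] using H3
  obtain ⟨c3, c4⟩ := chain_split c v3 v4 _ H3'
  refine ⟨walkOfChain a v1 v2 c1, walkOfChain b v2 v3 c2,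
    walkOfChain c v3 v4 c3, walkOfChain d v4 v1 c4, ?_⟩
  rw [walkOfChain_append c v3 v4 v1 d c3 c4 H3,
      walkOfChain_append b v2 v3 v1 (c ++ v4 :: d) c2 H3 H2,
      walkOfChain_append a v1 v2 v1 (b ++ v3 :: (c ++ v4 :: d)) c1 H2 h1]
  refine isHamiltonianCycle_walkOfChain _ _ _ hn hc ?_
  simp only [List.length_append, List.length_cons]
  omega

/-! ### Extracting ordered splits from lists -/

variable [DecidableEq V]

def extract (x : V) : List V → Option (List V × List V)
  | [] => none
  | y :: ys => if y = x then some ([], ys)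
      else (extract x ys).map fun p => (y :: p.1, p.2)

lemma extract_eq_some : ∀ (l s t : List V) {x : V}, extract x l = some (s, t) →
    l = s ++ x :: t
  | [], s, t, x, h => by simp [extract] at h
  | y :: ys, s, t, x, h => by
      by_cases hyx : y = x
      · simp only [extract, if_pos hyx, Option.some_inj, Prod.mk.injEq] at h
        subst hyx; rw [← h.1, ← h.2]; rfl
      · simp only [extract, if_neg hyx, Option.map_eq_some_iff] at h
        obtain ⟨⟨s', t'⟩, hp, he⟩ := h
        have := extract_eq_some ys s' t' hp
        simp only [Prod.mk.injEq] at he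
        rw [← he.1, ← he.2, this]; rfl

def orderedSplit (v2 v3 v4 : V) (l : List V) :
    Option (List V × List V × List V × List V) :=
  (extract v2 l).bind fun p =>
    (extract v3 p.2).bind fun q =>
      (extract v4 q.2).map fun r => (p.1, q.1, r.1, r.2)

lemma orderedSplit_eq_some {v2 v3 v4 : V} {l a b c d : List V}
    (h : orderedSplit v2 v3 v4 l = some (a, b, c, d)) :
    l = a ++ v2 :: (b ++ v3 :: (c ++ v4 :: d)) := by
  simp only [orderedSplit, Option.bind_eq_some_iff, Option.map_eq_some_iff] at h
  obtain ⟨⟨a', l2⟩, h2, ⟨b', l3⟩, h3, ⟨c', l4⟩, h4, he⟩ := h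
  simp only [Prod.mk.injEq] at he
  obtain ⟨rfl, rfl, rfl, rfl⟩ := he
  simp only at h3 h4
  rw [extract_eq_some _ _ _ h2, extract_eq_some _ _ _ h3, extract_eq_some _ _ _ h4]

/-- Transport `HamCycleInOrder4` along a graph isomorphism. -/
lemma HamCycleInOrder4.map {W : Type*} [DecidableEq W] {H : SimpleGraph W} (e : G ≃g H)
    {v1 v2 v3 v4 : V} (h : G.HamCycleInOrder4 v1 v2 v3 v4) :
    H.HamCycleInOrder4 (e v1) (e v2) (e v3) (e v4) := by
  obtain ⟨p, q, r, s, hp⟩ := h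
  refine ⟨p.map e.toHom, q.map e.toHom, r.map e.toHom, s.map e.toHom, ?_⟩
  rw [← Walk.map_append, ← Walk.map_append, ← Walk.map_append]
  exact hp.map (f := e.toHom) e.bijective

end SimpleGraph

/-! ### A decidable chain checker -/

def chainB {V : Type*} (R : V → V → Prop) [DecidableRel R] : V → List V → Bool
  | _, [] => true
  | u, x :: xs => decide (R u x) && chainB R x xs

lemma chain_of_chainB {V : Type*} {R : V → V → Prop} [DecidableRel R] :
    ∀ {u : V} {l : List V}, chainB R u l = true → List.Chain R u l
  | _, [], _ => List.Chain.nil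
  | u, x :: xs, h => by
      simp only [chainB, Bool.and_eq_true, decide_eq_true_eq] at h
      exact List.Chain.cons h.1 (chain_of_chainB h.2)

/-! ### The Heawood graph computations -/

instance : DecidableRel heawoodGraph.Adj :=
  fun a b => decidable_of_iff' _ (SimpleGraph.fromRel_adj _ a b)

def cycles0 : List (List (ZMod 14)) := [
  [1, 2, 3, 4, 5, 6, 7, 8, 9, 10, 11, 12, 13],
  [13, 12, 11, 10, 9, 8, 7, 6, 5, 4, 3, 2, 1],
  [1, 2, 3, 4, 9, 10, 11, 12, 13, 8, 7, 6, 5],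
  [5, 6, 7, 8, 13, 12, 11, 10, 9, 4, 3, 2, 1],
  [1, 2, 3, 12, 11, 10, 9, 4, 5, 6, 7, 8, 13],
  [13, 8, 7, 6, 5, 4, 9, 10, 11, 12, 3, 2, 1],
  [1, 2, 3, 12, 13, 8, 7, 6, 11, 10, 9, 4, 5],
  [5, 4, 9, 10, 11, 6, 7, 8, 13, 12, 3, 2, 1],
  [1, 2, 7, 6, 5, 4, 3, 12, 11, 10, 9, 8, 13],
  [13, 8, 9, 10, 11, 12, 3, 4, 5, 6, 7, 2, 1],
  [1, 2, 7, 6, 11, 10, 9, 8, 13, 12, 3, 4, 5],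
  [5, 4, 3, 12, 13, 8, 9, 10, 11, 6, 7, 2, 1],
  [1, 2, 7, 8, 9, 10, 11, 6, 5, 4, 3, 12, 13],
  [13, 12, 3, 4, 5, 6, 11, 10, 9, 8, 7, 2, 1],
  [1, 2, 7, 8, 13, 12, 3, 4, 9, 10, 11, 6, 5],
  [5, 6, 11, 10, 9, 4, 3, 12, 13, 8, 7, 2, 1],
  [1, 10, 9, 4, 3, 2, 7, 8, 13, 12, 11, 6, 5],
  [5, 6, 11, 12, 13, 8, 7, 2, 3, 4, 9, 10, 1],
  [1, 10, 9, 4, 5, 6, 11, 12, 3, 2, 7, 8, 13],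
  [13, 8, 7, 2, 3, 12, 11, 6, 5, 4, 9, 10, 1],
  [1, 10, 9, 8, 7, 2, 3, 4, 5, 6, 11, 12, 13],
  [13, 12, 11, 6, 5, 4, 3, 2, 7, 8, 9, 10, 1],
  [1, 10, 9, 8, 13, 12, 11, 6, 7, 2, 3, 4, 5],
  [5, 4, 3, 2, 7, 6, 11, 12, 13, 8, 9, 10, 1],
  [1, 10, 11, 6, 5, 4, 9, 8, 7, 2, 3, 12, 13],
  [13, 12, 3, 2, 7, 8, 9, 4, 5, 6, 11, 10, 1],
  [1, 10, 11, 6, 7, 2, 3, 12, 13, 8, 9, 4, 5],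
  [5, 4, 9, 8, 13, 12, 3, 2, 7, 6, 11, 10, 1],
  [1, 10, 11, 12, 3, 2, 7, 6, 5, 4, 9, 8, 13],
  [13, 8, 9, 4, 5, 6, 7, 2, 3, 12, 11, 10, 1],
  [1, 10, 11, 12, 13, 8, 9, 4, 3, 2, 7, 6, 5],
  [5, 6, 7, 2, 3, 4, 9, 8, 13, 12, 11, 10, 1],
  [5, 4, 3, 2, 1, 10, 9, 8, 7, 6, 11, 12, 13],
  [13, 12, 11, 6, 7, 8, 9, 10, 1, 2, 3, 4, 5],
  [5, 4, 3, 12, 11, 6, 7, 2, 1, 10, 9, 8, 13],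
  [13, 8, 9, 10, 1, 2, 7, 6, 11, 12, 3, 4, 5],
  [5, 4, 9, 8, 7, 6, 11, 10, 1, 2, 3, 12, 13],
  [13, 12, 3, 2, 1, 10, 11, 6, 7, 8, 9, 4, 5],
  [5, 4, 9, 10, 1, 2, 3, 12, 11, 6, 7, 8, 13],
  [13, 8, 7, 6, 11, 12, 3, 2, 1, 10, 9, 4, 5],
  [5, 6, 7, 2, 1, 10, 11, 12, 3, 4, 9, 8, 13],
  [13, 8, 9, 4, 3, 12, 11, 10, 1, 2, 7, 6, 5],
  [5, 6, 7, 8, 9, 4, 3, 2, 1, 10, 11, 12, 13],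
  [13, 12, 11, 10, 1, 2, 3, 4, 9, 8, 7, 6, 5],
  [5, 6, 11, 10, 1, 2, 7, 8, 9, 4, 3, 12, 13],
  [13, 12, 3, 4, 9, 8, 7, 2, 1, 10, 11, 6, 5],
  [5, 6, 11, 12, 3, 4, 9, 10, 1, 2, 7, 8, 13],
  [13, 8, 7, 2, 1, 10, 9, 4, 3, 12, 11, 6, 5]]

set_option maxRecDepth 40000 in
lemma cycles0_prop : ∀ m ∈ cycles0, chainB heawoodGraph.Adj 0 (m ++ [0]) = true ∧
    ((0 : ZMod 14) :: m).Nodup ∧ ∀ x : ZMod 14, x ∈ (0 : ZMod 14) :: m := by decide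

set_option maxRecDepth 100000 in
lemma cover0 : ∀ v2 v3 v4 : ZMod 14, v2 ≠ 0 → v3 ≠ 0 → v4 ≠ 0 →
    v2 ≠ v3 → v2 ≠ v4 → v3 ≠ v4 →
    ∃ m ∈ cycles0, (SimpleGraph.orderedSplit v2 v3 v4 m).isSome = true := by decide

lemma main0 : ∀ v2 v3 v4 : ZMod 14, v2 ≠ 0 → v3 ≠ 0 → v4 ≠ 0 →
    v2 ≠ v3 → v2 ≠ v4 → v3 ≠ v4 →
    heawoodGraph.HamCycleInOrder4 0 v2 v3 v4 := by
  intro v2 v3 v4 h2 h3 h4 h23 h24 h34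
  obtain ⟨m, hm, hs⟩ := cover0 v2 v3 v4 h2 h3 h4 h23 h24 h34
  obtain ⟨⟨a, b, c, d⟩, he⟩ := Option.isSome_iff_exists.mp hs
  obtain ⟨hch, hnd, hcov⟩ := cycles0_prop m hm
  have hm' := SimpleGraph.orderedSplit_eq_some he
  subst hm'
  exact SimpleGraph.hamCycleInOrder4_of_list 0 v2 v3 v4 a b c d
    (chain_of_chainB hch) hnd hcov

/-! ### Symmetries of the Heawood graph -/

lemma rot_adj : ∀ t i j : ZMod 14, Even t.val →
    (heawoodGraph.Adj (i + t) (j + t) ↔ heawoodGraph.Adj i j) := by decide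

lemma refl_adj : ∀ c i j : ZMod 14, Odd c.val →
    (heawoodGraph.Adj (c - i) (c - j) ↔ heawoodGraph.Adj i j) := by decide

def rotIso (t : ZMod 14) (ht : Even t.val) : heawoodGraph ≃g heawoodGraph :=
  { Equiv.addRight t with map_rel_iff' := fun {i j} => rot_adj t i j ht }

def reflIso (c : ZMod 14) (hc : Odd c.val) : heawoodGraph ≃g heawoodGraph :=
  { Equiv.subLeft c with map_rel_iff' := fun {i j} => refl_adj c i j hc }

theorem heawood_fourOrderedHamiltonian : heawoodGraph.FourOrderedHamiltonian := by
  intro v1 v2 v3 v4 h12 h13 h14 h23 h24 h34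
  obtain ⟨e, he⟩ : ∃ e : heawoodGraph ≃g heawoodGraph, e 0 = v1 := by
    rcases Nat.even_or_odd v1.val with hv | hv
    · exact ⟨rotIso v1 hv, by simp [rotIso, Equiv.addRight]⟩
    · exact ⟨reflIso v1 hv, by simp [reflIso, Equiv.subLeft]⟩
  have hinj : Function.Injective e := e.injective
  have key := main0 (e.symm v2) (e.symm v3) (e.symm v4)
    (fun h => h12 (by rw [← he, ← e.apply_symm_apply v2, h]))
    (fun h => h13 (by rw [← he, ← e.apply_symm_apply v3, h]))
    (fun h => h14 (by rw [← he, ← e.apply_symm_apply v4, h]))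
    (fun h => h23 (by rw [← e.apply_symm_apply v2, ← e.apply_symm_apply v3, h]))
    (fun h => h24 (by rw [← e.apply_symm_apply v2, ← e.apply_symm_apply v4, h]))
    (fun h => h34 (by rw [← e.apply_symm_apply v3, ← e.apply_symm_apply v4, h]))
  have := key.map e
  simpa only [he, e.apply_symm_apply] using this
end
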